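/- arXiv:0812.0214 — 2 statements merged into one kernel-verified Lean document; each statement's English description precedes it below -/
import Mathlib

section
/- Let W be a graphon with values in [0,1] such that the set {(x,y) ∈ I² : W(x,y) ∈ {0,1}} has Lebesgue measure strictly less than 1, and let W₁, W₂, … be graphons with values in [0,1], each taking values in {0,1} almost everywhere, such that δ_□(W_n, W) → 0 as n → ∞. Then the sequence (W_n) contains no subsequence that is Cauchy with respect to δ₁; that is, there is no strictly increasing sequence of indices n₁ < n₂ < … such that for every ε > 0 there is K with δ₁(W_{n_k}, W_{n_l}) < ε for all k, l ≥ K. -/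
open MeasureTheory Set
open scoped symmDiff

noncomputable section

/-- The unit interval `[0,1]` with Lebesgue measure. -/
abbrev I01 : Type := unitInterval

/-- A graphon: a bounded symmetric Lebesgue(=a.e.)-measurable function on `I² `. -/
def IsGraphon (W : I01 × I01 → ℝ) : Prop :=
  (∀ x y : I01, W (x, y) = W (y, x)) ∧ (∃ C : ℝ, ∀ p, |W p| ≤ C) ∧ AEMeasurable W volume

/-- The cut norm of `W`. -/
def cutNorm (W : I01 × I01 → ℝ) : ℝ :=
  sSup { r : ℝ | ∃ S T : Set I01, NullMeasurableSet S volume ∧ NullMeasurableSet T volume ∧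
    r = |∫ p in S ×ˢ T, W p| }

/-- The `L¹` norm of `W`. -/
def l1Norm (W : I01 × I01 → ℝ) : ℝ := ∫ p, |W p|

/-- Lebesgue-measurable measure preserving self-maps of `[0,1]` (the class `Φ`). -/
def MPhi (φ : I01 → I01) : Prop :=
  AEMeasurable φ volume ∧
    ∀ A : Set I01, NullMeasurableSet A volume → volume (φ ⁻¹' A) = volume A

/-- Invertible measure preserving maps (the class `Φ₀`). -/
def MPhi0 (φ : I01 → I01) : Prop :=
  Function.Bijective φ ∧ MPhi φ ∧ MPhi (Function.invFun φ)

/-- `W^φ (x,y) = W (φ x, φ y)`. -/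
def compMap (W : I01 × I01 → ℝ) (φ : I01 → I01) : I01 × I01 → ℝ :=
  fun p => W (φ p.1, φ p.2)

/-- The distance `δ₁` on graphons. -/
def gDelta1 (U W : I01 × I01 → ℝ) : ℝ :=
  sInf { r : ℝ | ∃ φ : I01 → I01, MPhi0 φ ∧ r = l1Norm (fun p => U p - compMap W φ p) }

/-- The cut distance `δ_□` on graphons. -/
def gDeltaBox (U W : I01 × I01 → ℝ) : ℝ :=
  sInf { r : ℝ | ∃ φ : I01 → I01, MPhi0 φ ∧ r = cutNorm (fun p => U p - compMap W φ p) }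

open Classical in
/-- The homomorphism density `t(F,W)` of a graph `F` on `[k]` in `W`. -/
def homDensity {k : ℕ} (F : SimpleGraph (Fin k)) (W : I01 × I01 → ℝ) : ℝ :=
  ∫ x : Fin k → I01,
    ∏ e ∈ Finset.univ.filter (fun e : Fin k × Fin k => e.1 < e.2 ∧ F.Adj e.1 e.2),
      W (x e.1, x e.2)

open Classical in
/-- The real-valued adjacency indicator of a graph. -/
def adjInd {V : Type*} (G : SimpleGraph V) (i j : V) : ℝ := if G.Adj i j then 1 else 0

/-- Overlay matrices: nonnegative with row sums `1/m` and column sums `1/n`. -/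
def IsOverlay (m n : ℕ) (A : Matrix (Fin m) (Fin n) ℝ) : Prop :=
  (∀ i j, 0 ≤ A i j) ∧ (∀ i, ∑ j, A i j = 1 / (m : ℝ)) ∧ (∀ j, ∑ i, A i j = 1 / (n : ℝ))

/-- The fractional distance `δ₁` between two graphs. -/
def graphDelta1 {m n : ℕ} (G : SimpleGraph (Fin m)) (H : SimpleGraph (Fin n)) : ℝ :=
  sInf { r : ℝ | ∃ A : Matrix (Fin m) (Fin n) ℝ, IsOverlay m n A ∧
    r = ∑ i, ∑ j, ∑ g, ∑ h, A i g * A j h * |adjInd G i j - adjInd H g h| }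

/-- The edit distance `δ̂₁` between two graphs on `[n]`. -/
def editDist {n : ℕ} (G H : SimpleGraph (Fin n)) : ℝ :=
  (2 / (n : ℝ) ^ 2) *
    sInf { r : ℝ | ∃ σ : Fin n ≃ Fin n,
      r = (∑ i, ∑ j, |adjInd G (σ i) (σ j) - adjInd H i j|) / 2 }

open Classical in
/-- The step graphon `W_G` associated with a graph `G` on `[n]`. -/
def stepGraphon {n : ℕ} (G : SimpleGraph (Fin n)) : I01 × I01 → ℝ :=
  fun p => if ∃ k l : Fin n, G.Adj k l ∧
      ((k : ℕ) : ℝ) / n ≤ (p.1 : ℝ) ∧ (p.1 : ℝ) < ((k : ℕ) + 1 : ℝ) / n ∧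
      ((l : ℕ) : ℝ) / n ≤ (p.2 : ℝ) ∧ (p.2 : ℝ) < ((l : ℕ) + 1 : ℝ) / n
    then 1 else 0


-- ## auxiliary lemmas

section Aux

lemma mphi_id : MPhi (id : I01 → I01) := ⟨aemeasurable_id, fun A _ => rfl⟩

lemma mphi0_id : MPhi0 (id : I01 → I01) := by
  refine ⟨Function.bijective_id, mphi_id, ?_⟩
  have : Function.invFun (id : I01 → I01) = id := by
    funext x; exact Function.invFun_eq (f := (id : I01 → I01)) ⟨x, rfl⟩
  rw [this]; exact mphi_id

lemma MPhi.nullMeasurable {φ : I01 → I01} (hφ : MPhi φ) {A : Set I01}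
    (hA : NullMeasurableSet A volume) : NullMeasurableSet (φ ⁻¹' A) volume := by
  obtain ⟨g, hg, hgφ⟩ := hφ.1
  obtain ⟨B, hB, hAB⟩ := hA
  have hABn : volume (A ∆ B) = 0 := measure_symmDiff_eq_zero_iff.mpr hAB
  have h1 : volume (φ ⁻¹' (A ∆ B)) = 0 := by
    rw [hφ.2 _ (NullMeasurableSet.of_null hABn)]; exact hABn
  have h2 : volume {x | φ x ≠ g x} = 0 := by
    simpa [Filter.EventuallyEq, ae_iff] using hgφ
  have hsub : (φ ⁻¹' A) ∆ (g ⁻¹' B) ⊆ φ ⁻¹' (A ∆ B) ∪ {x | φ x ≠ g x} := by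
    intro x hx
    by_cases hxg : φ x = g x
    · left
      rw [Set.mem_symmDiff] at hx
      rw [Set.mem_preimage, Set.mem_symmDiff]
      rcases hx with ⟨h3, h4⟩ | ⟨h3, h4⟩
      · exact Or.inl ⟨h3, by rw [hxg]; exact h4⟩
      · exact Or.inr ⟨by rw [hxg]; exact h3, h4⟩
    · right; exact hxg
  have hnull : volume ((φ ⁻¹' A) ∆ (g ⁻¹' B)) = 0 := by
    refine measure_mono_null hsub ?_
    refine le_antisymm ((measure_union_le _ _).trans ?_) (zero_le)
    rw [h1, h2, add_zero]
  exact ⟨g ⁻¹' B, hg hB, measure_symmDiff_eq_zero_iff.mp hnull⟩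

lemma MPhi.comp {φ ψ : I01 → I01} (hφ : MPhi φ) (hψ : MPhi ψ) : MPhi (φ ∘ ψ) := by
  obtain ⟨g, hg, hgφ⟩ := hφ.1
  constructor
  · -- AEMeasurable (φ ∘ ψ)
    have h2 : volume {x | ψ x ∈ {y | φ y ≠ g y}} = 0 := by
      rw [show {x | ψ x ∈ {y | φ y ≠ g y}} = ψ ⁻¹' {y | φ y ≠ g y} from rfl,
        hψ.2 _ (NullMeasurableSet.of_null (by simpa [Filter.EventuallyEq, ae_iff] using hgφ))]
      simpa [Filter.EventuallyEq, ae_iff] using hgφ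
    have : (fun x => φ (ψ x)) =ᶠ[ae volume] fun x => g (ψ x) := by
      rw [Filter.EventuallyEq, ae_iff]
      refine le_antisymm (le_trans (measure_mono ?_) h2.le) (zero_le)
      intro x hx; exact hx
    exact (hg.comp_aemeasurable hψ.1).congr this.symm
  · intro A hA
    have : (φ ∘ ψ) ⁻¹' A = ψ ⁻¹' (φ ⁻¹' A) := rfl
    rw [this, hψ.2 _ (hφ.nullMeasurable hA), hφ.2 _ hA]

lemma MPhi0.comp {φ ψ : I01 → I01} (hφ : MPhi0 φ) (hψ : MPhi0 ψ) : MPhi0 (φ ∘ ψ) := by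
  refine ⟨hφ.1.comp hψ.1, hφ.2.1.comp hψ.2.1, ?_⟩
  have : Function.invFun (φ ∘ ψ) = Function.invFun ψ ∘ Function.invFun φ := by
    funext x
    apply (hφ.1.comp hψ.1).injective
    have h1 : (φ ∘ ψ) (Function.invFun (φ ∘ ψ) x) = x :=
      Function.invFun_eq ((hφ.1.comp hψ.1).surjective x)
    have h2 : ψ (Function.invFun ψ (Function.invFun φ x)) = Function.invFun φ x :=
      Function.invFun_eq (hψ.1.surjective _)
    have h3 : φ (Function.invFun φ x) = x := Function.invFun_eq (hφ.1.surjective x)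
    rw [h1]
    show x = φ (ψ (Function.invFun ψ (Function.invFun φ x)))
    rw [h2, h3]
  rw [this]
  exact hψ.2.2.comp hφ.2.2

/-- a measurable version of an `MPhi` map, with the square map measure preserving. -/
lemma MPhi.exists_sq {φ : I01 → I01} (hφ : MPhi φ) :
    ∃ g : I01 → I01, Measurable g ∧
      MeasurePreserving (fun p : I01 × I01 => (g p.1, g p.2)) volume volume ∧
      (∀ᵐ p : I01 × I01, (φ p.1, φ p.2) = (g p.1, g p.2)) := by
  obtain ⟨g, hg, hgφ⟩ := hφ.1
  have hN : volume {x | φ x ≠ g x} = 0 := by simpa [Filter.EventuallyEq, ae_iff] using hgφ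
  have hmp : MeasurePreserving g volume volume := by
    refine ⟨hg, ?_⟩
    ext A hA
    rw [MeasureTheory.Measure.map_apply hg hA]
    have : volume (g ⁻¹' A) = volume (φ ⁻¹' A) := by
      refine measure_congr ?_
      rw [← measure_symmDiff_eq_zero_iff (μ := volume)]
      refine le_antisymm (le_trans (measure_mono ?_) hN.le) (zero_le)
      intro x hx
      rw [Set.mem_symmDiff] at hx
      rcases hx with ⟨h3, h4⟩ | ⟨h3, h4⟩
      · intro h; rw [Set.mem_preimage, h] at h4; exact h4 h3
      · intro h; rw [Set.mem_preimage, h] at h3; exact h4 h3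
    rw [this, hφ.2 _ hA.nullMeasurableSet]
  have hsq : MeasurePreserving (fun p : I01 × I01 => (g p.1, g p.2)) volume volume := by
    have := hmp.prod hmp
    exact this
  refine ⟨g, hg, hsq, ?_⟩
  have h1 : volume ({x : I01 | φ x ≠ g x} ×ˢ (univ : Set I01)) = 0 := by
    rw [show (volume : Measure (I01 × I01)) = (volume : Measure I01).prod volume from rfl,
      Measure.prod_prod, hN, zero_mul]
  have h2 : volume ((univ : Set I01) ×ˢ {x : I01 | φ x ≠ g x}) = 0 := by
    rw [show (volume : Measure (I01 × I01)) = (volume : Measure I01).prod volume from rfl,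
      Measure.prod_prod, hN, mul_zero]
  rw [ae_iff]
  have hsub : {p : I01 × I01 | ¬((φ p.1, φ p.2) = (g p.1, g p.2))} ⊆
      ({x : I01 | φ x ≠ g x} ×ˢ (univ : Set I01)) ∪
        ((univ : Set I01) ×ˢ {x : I01 | φ x ≠ g x}) := by
    intro p hp
    simp only [Set.mem_setOf_eq, Prod.mk.injEq, not_and_or] at hp
    rcases hp with h | h
    · exact Or.inl ⟨h, Set.mem_univ _⟩
    · exact Or.inr ⟨Set.mem_univ _, h⟩
  refine le_antisymm ((measure_mono hsub).trans ((measure_union_le _ _).trans ?_)) (zero_le)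
  rw [h1, h2, add_zero]

lemma MPhi.ae_comp {φ : I01 → I01} (hφ : MPhi φ) {P : I01 × I01 → Prop}
    (h : ∀ᵐ q : I01 × I01, P q) : ∀ᵐ p : I01 × I01, P (φ p.1, φ p.2) := by
  obtain ⟨g, hg, hsq, hae⟩ := hφ.exists_sq
  have h1 : ∀ᵐ p : I01 × I01, P (g p.1, g p.2) := hsq.quasiMeasurePreserving.ae h
  filter_upwards [h1, hae] with p h1 h2
  rw [h2]; exact h1

lemma MPhi.integral_comp {φ : I01 → I01} (hφ : MPhi φ) {F : I01 × I01 → ℝ}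
    (hF : AEStronglyMeasurable F volume) :
    ∫ p : I01 × I01, F (φ p.1, φ p.2) = ∫ p, F p := by
  obtain ⟨g, hg, hsq, hae⟩ := hφ.exists_sq
  have h1 : ∫ p : I01 × I01, F (φ p.1, φ p.2) = ∫ p : I01 × I01, F (g p.1, g p.2) := by
    refine integral_congr_ae ?_
    filter_upwards [hae] with p h2
    rw [h2]
  rw [h1]
  have hF' : AEStronglyMeasurable F
      (Measure.map (fun p : I01 × I01 => (g p.1, g p.2)) volume) := by
    rw [hsq.map_eq]; exact hF
  have := MeasureTheory.integral_map (φ := fun p : I01 × I01 => (g p.1, g p.2))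
    hsq.measurable.aemeasurable hF'
  rw [hsq.map_eq] at this
  exact this.symm

lemma MPhi.aemeasurable_comp {φ : I01 → I01} (hφ : MPhi φ) {F : I01 × I01 → ℝ}
    (hF : AEMeasurable F volume) :
    AEMeasurable (fun p : I01 × I01 => F (φ p.1, φ p.2)) volume := by
  obtain ⟨g, hg, hsq, hae⟩ := hφ.exists_sq
  obtain ⟨F₀, hF₀, hFF₀⟩ := hF
  have h1 : ∀ᵐ p : I01 × I01, F (g p.1, g p.2) = F₀ (g p.1, g p.2) :=
    hsq.quasiMeasurePreserving.ae hFF₀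
  have h2 : ∀ᵐ p : I01 × I01, F (φ p.1, φ p.2) = F₀ (g p.1, g p.2) := by
    filter_upwards [h1, hae] with p h1 h2
    rw [h2]; exact h1
  have h2' : (fun p : I01 × I01 => F₀ (g p.1, g p.2)) =ᶠ[ae volume]
      (fun p : I01 × I01 => F (φ p.1, φ p.2)) := by
    filter_upwards [h2] with p h; exact h.symm
  exact (((hF₀.comp (hg.comp measurable_fst |>.prodMk (hg.comp measurable_snd)))).aemeasurable).congr h2' 

lemma integrable_of_bdd {F : I01 × I01 → ℝ} (hF : AEStronglyMeasurable F volume)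
    {C : ℝ} (h : ∀ᵐ p : I01 × I01, |F p| ≤ C) : Integrable F volume := by
  exact (integrable_const C).mono' hF (by simpa [Real.norm_eq_abs] using h)

lemma abs_setIntegral_le {F : I01 × I01 → ℝ} (hF : Integrable F volume)
    (s : Set (I01 × I01)) : |∫ p in s, F p| ≤ l1Norm F := by
  have h1 : |∫ p in s, F p| ≤ ∫ p in s, |F p| := by
    simpa [Real.norm_eq_abs] using
      norm_integral_le_integral_norm (f := F) (μ := volume.restrict s)
  refine h1.trans ?_
  refine setIntegral_le_integral hF.abs ?_
  filter_upwards with p; positivity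

lemma cutNorm_bddAbove {F : I01 × I01 → ℝ} (hF : Integrable F volume) :
    BddAbove { r : ℝ | ∃ S T : Set I01, NullMeasurableSet S volume ∧
      NullMeasurableSet T volume ∧ r = |∫ p in S ×ˢ T, F p| } := by
  refine ⟨l1Norm F, ?_⟩
  rintro r ⟨S, T, _, _, rfl⟩
  exact abs_setIntegral_le hF _

lemma le_cutNorm {F : I01 × I01 → ℝ} (hF : Integrable F volume) {S T : Set I01}
    (hS : NullMeasurableSet S volume) (hT : NullMeasurableSet T volume) :
    |∫ p in S ×ˢ T, F p| ≤ cutNorm F :=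
  le_csSup (cutNorm_bddAbove hF) ⟨S, T, hS, hT, rfl⟩

lemma exists_of_gDelta1_lt {U W : I01 × I01 → ℝ} {ε : ℝ} (h : gDelta1 U W < ε) :
    ∃ φ : I01 → I01, MPhi0 φ ∧ l1Norm (fun p => U p - compMap W φ p) < ε := by
  rw [gDelta1] at h
  have hne : Set.Nonempty { r : ℝ | ∃ φ : I01 → I01, MPhi0 φ ∧
      r = l1Norm (fun p => U p - compMap W φ p) } := ⟨_, ⟨id, mphi0_id, rfl⟩⟩
  obtain ⟨r, ⟨φ, hφ, rfl⟩, hr⟩ := exists_lt_of_csInf_lt hne h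
  exact ⟨φ, hφ, hr⟩

lemma exists_of_gDeltaBox_lt {U W : I01 × I01 → ℝ} {ε : ℝ} (h : gDeltaBox U W < ε) :
    ∃ φ : I01 → I01, MPhi0 φ ∧ cutNorm (fun p => U p - compMap W φ p) < ε := by
  rw [gDeltaBox] at h
  have hne : Set.Nonempty { r : ℝ | ∃ φ : I01 → I01, MPhi0 φ ∧
      r = cutNorm (fun p => U p - compMap W φ p) } := ⟨_, ⟨id, mphi0_id, rfl⟩⟩
  obtain ⟨r, ⟨φ, hφ, rfl⟩, hr⟩ := exists_lt_of_csInf_lt hne h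
  exact ⟨φ, hφ, hr⟩

lemma prod_ae_eq_prod {S S' T T' : Set I01} (hS : S =ᵐ[volume] S') (hT : T =ᵐ[volume] T') :
    ((S ×ˢ T : Set (I01 × I01)) : Set (I01 × I01)) =ᵐ[volume] (S' ×ˢ T' : Set (I01 × I01)) := by
  rw [← measure_symmDiff_eq_zero_iff (μ := (volume : Measure (I01 × I01)))]
  have h1 : volume ((S ∆ S') ×ˢ (univ : Set I01)) = 0 := by
    rw [show (volume : Measure (I01 × I01)) = (volume : Measure I01).prod volume from rfl,
      Measure.prod_prod, measure_symmDiff_eq_zero_iff.mpr hS, zero_mul]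
  have h2 : volume ((univ : Set I01) ×ˢ (T ∆ T')) = 0 := by
    rw [show (volume : Measure (I01 × I01)) = (volume : Measure I01).prod volume from rfl,
      Measure.prod_prod, measure_symmDiff_eq_zero_iff.mpr hT, mul_zero]
  have hsub : (S ×ˢ T : Set (I01 × I01)) ∆ (S' ×ˢ T') ⊆
      ((S ∆ S') ×ˢ (univ : Set I01)) ∪ ((univ : Set I01) ×ˢ (T ∆ T')) := by
    intro p hp
    simp only [Set.mem_symmDiff, Set.mem_prod, Set.mem_union, Set.mem_univ, and_true, true_and,
      not_and, not_or] at hp ⊢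
    tauto
  refine le_antisymm ((measure_mono hsub).trans ((measure_union_le _ _).trans ?_)) (zero_le)
  rw [h1, h2, add_zero]

lemma indicator_ae_eq_of_set_ae_eq {A B : Set (I01 × I01)} (h : A =ᵐ[volume] B)
    (H : I01 × I01 → ℝ) : A.indicator H =ᵐ[volume] B.indicator H := by
  have := Filter.eventuallyEq_set.mp h
  filter_upwards [this] with p hp
  by_cases hA : p ∈ A
  · rw [Set.indicator_of_mem hA, Set.indicator_of_mem (hp.mp hA)]
  · rw [Set.indicator_of_notMem hA, Set.indicator_of_notMem (fun hB => hA (hp.mpr hB))]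

lemma setIntegral_comp_eq {ψ : I01 → I01} (hψ : MPhi0 ψ) {H : I01 × I01 → ℝ}
    (hH : Integrable H volume) {S T : Set I01} (hS : MeasurableSet S) (hT : MeasurableSet T) :
    ∃ S'' T'' : Set I01, MeasurableSet S'' ∧ MeasurableSet T'' ∧
      ∫ p in S ×ˢ T, H (ψ p.1, ψ p.2) = ∫ p in S'' ×ˢ T'', H p := by
  set S' : Set I01 := Function.invFun ψ ⁻¹' S with hS'def
  set T' : Set I01 := Function.invFun ψ ⁻¹' T with hT'def
  have hS' : NullMeasurableSet S' volume := hψ.2.2.nullMeasurable hS.nullMeasurableSet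
  have hT' : NullMeasurableSet T' volume := hψ.2.2.nullMeasurable hT.nullMeasurableSet
  refine ⟨toMeasurable volume S', toMeasurable volume T',
    measurableSet_toMeasurable _ _, measurableSet_toMeasurable _ _, ?_⟩
  have hleft : Function.LeftInverse (Function.invFun ψ) ψ :=
    Function.leftInverse_invFun hψ.1.injective
  have key : ∀ p : I01 × I01, Set.indicator (S ×ˢ T) (fun p => H (ψ p.1, ψ p.2)) p =
      Set.indicator (S' ×ˢ T') H (ψ p.1, ψ p.2) := by
    intro p
    have hmem : (ψ p.1, ψ p.2) ∈ (S' ×ˢ T' : Set (I01 × I01)) ↔ p ∈ (S ×ˢ T : Set (I01 × I01)) := by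
      constructor
      · rintro ⟨h1, h2⟩
        simp only [hS'def, hT'def, Set.mem_preimage, hleft p.1, hleft p.2] at h1 h2
        exact ⟨h1, h2⟩
      · rintro ⟨h1, h2⟩
        exact ⟨by simp only [hS'def, Set.mem_preimage, hleft p.1]; exact h1,
          by simp only [hT'def, Set.mem_preimage, hleft p.2]; exact h2⟩
    by_cases hp : p ∈ (S ×ˢ T : Set (I01 × I01))
    · rw [Set.indicator_of_mem hp, Set.indicator_of_mem (hmem.mpr hp)]
    · rw [Set.indicator_of_notMem hp, Set.indicator_of_notMem (fun h => hp (hmem.mp h))]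
  have hae : Set.indicator (S' ×ˢ T' : Set (I01 × I01)) H =ᵐ[volume]
      Set.indicator ((toMeasurable volume S') ×ˢ (toMeasurable volume T') : Set (I01 × I01)) H :=
    indicator_ae_eq_of_set_ae_eq
      (prod_ae_eq_prod (hS'.toMeasurable_ae_eq).symm (hT'.toMeasurable_ae_eq).symm) H
  calc ∫ p in S ×ˢ T, H (ψ p.1, ψ p.2)
      = ∫ p, Set.indicator (S ×ˢ T) (fun p => H (ψ p.1, ψ p.2)) p := by
        rw [integral_indicator (hS.prod hT)]
    _ = ∫ p : I01 × I01, Set.indicator (S' ×ˢ T') H (ψ p.1, ψ p.2) := by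
        exact integral_congr_ae (Filter.Eventually.of_forall key)
    _ = ∫ p : I01 × I01, Set.indicator
          ((toMeasurable volume S') ×ˢ (toMeasurable volume T')) H (ψ p.1, ψ p.2) := by
        refine integral_congr_ae ?_
        exact hψ.2.1.ae_comp hae
    _ = ∫ q, Set.indicator ((toMeasurable volume S') ×ˢ (toMeasurable volume T')) H q := by
        refine hψ.2.1.integral_comp ?_
        exact hH.aestronglyMeasurable.indicator
          ((measurableSet_toMeasurable _ _).prod (measurableSet_toMeasurable _ _))
    _ = ∫ p in (toMeasurable volume S') ×ˢ (toMeasurable volume T'), H p := by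
        rw [integral_indicator (((measurableSet_toMeasurable _ _)).prod
          (measurableSet_toMeasurable _ _))]

lemma abs_setIntegral_comp_le_cutNorm {ψ : I01 → I01} (hψ : MPhi0 ψ) {H : I01 × I01 → ℝ}
    (hH : Integrable H volume) {S T : Set I01} (hS : MeasurableSet S) (hT : MeasurableSet T) :
    |∫ p in S ×ˢ T, H (ψ p.1, ψ p.2)| ≤ cutNorm H := by
  obtain ⟨S'', T'', hS'', hT'', heq⟩ := setIntegral_comp_eq hψ hH hS hT
  rw [heq]
  exact le_cutNorm hH hS''.nullMeasurableSet hT''.nullMeasurableSet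

def cellI (n i : ℕ) : Set I01 := Subtype.val ⁻¹' (Set.Ico ((i : ℝ)/n) (((i : ℝ)+1)/n))

lemma cellI_measurable (n i : ℕ) : MeasurableSet (cellI n i) :=
  measurable_subtype_coe measurableSet_Ico

lemma cellI_volume {n i : ℕ} (hn : 0 < n) (hi : i < n) :
    volume (cellI n i) = ENNReal.ofReal (1/(n:ℝ)) := by
  have hsub : Set.Ico ((i : ℝ)/n) (((i : ℝ)+1)/n) ⊆ Set.Icc (0:ℝ) 1 := by
    intro x hx
    have hn' : (0:ℝ) < n := by exact_mod_cast hn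
    constructor
    · exact le_trans (by positivity) hx.1
    · refine le_trans hx.2.le ?_
      rw [div_le_one hn']
      have : (i:ℝ) + 1 ≤ n := by exact_mod_cast hi
      exact this
  rw [show cellI n i = (Subtype.val ⁻¹' (Set.Ico ((i : ℝ)/n) (((i : ℝ)+1)/n)) :
    Set I01) from rfl]
  rw [volume_preimage_coe nullMeasurableSet_Icc measurableSet_Ico]
  rw [Set.inter_eq_left.mpr hsub, Real.volume_Ico]
  congr 1
  have hn' : (0:ℝ) < n := by exact_mod_cast hn
  field_simp
  ring

lemma cellI_disjoint {n i j : ℕ} (hn : 0 < n) (hij : i ≠ j) :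
    Disjoint (cellI n i) (cellI n j) := by
  have hn' : (0:ℝ) < n := by exact_mod_cast hn
  have key : ∀ a b : ℕ, a < b → ∀ x : I01, x ∈ cellI n a → x ∈ cellI n b → False := by
    intro a b hab x hxa hxb
    have h1 : (a:ℝ) + 1 ≤ b := by exact_mod_cast hab
    have h2 : ((a:ℝ)+1)/n ≤ (b:ℝ)/n := by
      gcongr
    have h3 := hxa.2
    have h4 := hxb.1
    linarith
  rw [Set.disjoint_left]
  intro x hxi hxj
  rcases Nat.lt_or_ge i j with h | h
  · exact key i j h x hxi hxj
  · exact key j i (lt_of_le_of_ne h (Ne.symm hij)) x hxj hxi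

lemma cellI_cover {n : ℕ} (hn : 0 < n) (x : I01) (hx : (x:ℝ) < 1) :
    ∃ i : ℕ, i < n ∧ x ∈ cellI n i := by
  have hn' : (0:ℝ) < n := by exact_mod_cast hn
  have hx0 : (0:ℝ) ≤ (x:ℝ) := x.2.1
  have hxn0 : (0:ℝ) ≤ (x:ℝ) * n := by positivity
  refine ⟨⌊(x:ℝ) * n⌋₊, ?_, ?_, ?_⟩
  · rw [Nat.floor_lt hxn0]
    calc (x:ℝ) * n < 1 * n := by exact mul_lt_mul_of_pos_right hx hn'
      _ = n := one_mul _
  · rw [div_le_iff₀ hn']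
    exact Nat.floor_le hxn0
  · rw [lt_div_iff₀ hn']
    exact Nat.lt_floor_add_one _

lemma cellI_dist {n i : ℕ} {x y : I01} (hx : x ∈ cellI n i) (hy : y ∈ cellI n i) :
    dist x y < 1/(n:ℝ) := by
  rw [Subtype.dist_eq, Real.dist_eq, abs_sub_lt_iff]
  have h : ((i:ℝ)+1)/n = (i:ℝ)/n + 1/n := by ring
  have h1 := hx.2
  have h2 := hy.1
  have h3 := hy.2
  have h4 := hx.1
  constructor <;> linarith

lemma volume_coord_one_left : volume ({p : I01 × I01 | (p.1:ℝ) = 1}) = 0 := by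
  have h0 : volume ({x : I01 | (x:ℝ) = 1}) = 0 := by
    rw [show {x : I01 | (x:ℝ) = 1} = (Subtype.val ⁻¹' ({1} : Set ℝ) : Set I01) from rfl]
    rw [volume_preimage_coe nullMeasurableSet_Icc (measurableSet_singleton 1)]
    exact le_antisymm (le_trans (measure_mono Set.inter_subset_left)
      (le_of_eq (Real.volume_singleton))) (zero_le)
  have : ({p : I01 × I01 | (p.1:ℝ) = 1}) = ({x : I01 | (x:ℝ) = 1} ×ˢ (univ : Set I01)) := by
    ext p; simp only [Set.mem_setOf_eq, Set.mem_prod, Set.mem_univ, and_true]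
  rw [this, show (volume : Measure (I01 × I01)) = (volume : Measure I01).prod volume from rfl,
    Measure.prod_prod, h0, zero_mul]

lemma volume_coord_one_right : volume ({p : I01 × I01 | (p.2:ℝ) = 1}) = 0 := by
  have h0 : volume ({x : I01 | (x:ℝ) = 1}) = 0 := by
    rw [show {x : I01 | (x:ℝ) = 1} = (Subtype.val ⁻¹' ({1} : Set ℝ) : Set I01) from rfl]
    rw [volume_preimage_coe nullMeasurableSet_Icc (measurableSet_singleton 1)]
    exact le_antisymm (le_trans (measure_mono Set.inter_subset_left)
      (le_of_eq (Real.volume_singleton))) (zero_le)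
  have : ({p : I01 × I01 | (p.2:ℝ) = 1}) = ((univ : Set I01) ×ˢ {x : I01 | (x:ℝ) = 1}) := by
    ext p; simp only [Set.mem_setOf_eq, Set.mem_prod, Set.mem_univ, true_and]
  rw [this, show (volume : Measure (I01 × I01)) = (volume : Measure I01).prod volume from rfl,
    Measure.prod_prod, h0, mul_zero]

lemma sum_cell_integral {n : ℕ} (hn : 0 < n) {f : I01 × I01 → ℝ} (hf : Integrable f volume) :
    ∑ ij : Fin n × Fin n, ∫ p in ((cellI n ij.1) ×ˢ (cellI n ij.2) : Set (I01 × I01)), f p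
      = ∫ p, f p := by
  have hmeas : ∀ ij : Fin n × Fin n, MeasurableSet ((cellI n ij.1) ×ˢ (cellI n ij.2) :
      Set (I01 × I01)) := fun ij => (cellI_measurable _ _).prod (cellI_measurable _ _)
  have hdisj : (↑(Finset.univ : Finset (Fin n × Fin n)) : Set (Fin n × Fin n)).Pairwise
      (Function.onFun Disjoint fun ij : Fin n × Fin n =>
        ((cellI n ij.1) ×ˢ (cellI n ij.2) : Set (I01 × I01))) := by
    intro ij _ kl _ hne
    rw [Function.onFun, Set.disjoint_left]
    rintro p ⟨h1, h2⟩ ⟨h3, h4⟩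
    by_cases hik : (ij.1 : ℕ) = (kl.1 : ℕ)
    · by_cases hjl : (ij.2 : ℕ) = (kl.2 : ℕ)
      · exact hne (Prod.ext (Fin.ext hik) (Fin.ext hjl))
      · exact (Set.disjoint_left.mp (cellI_disjoint hn hjl)) h2 h4
    · exact (Set.disjoint_left.mp (cellI_disjoint hn hik)) h1 h3
  have hbi := integral_biUnion_finset (Finset.univ : Finset (Fin n × Fin n))
    (fun ij _ => hmeas ij) hdisj (fun ij _ => hf.integrableOn)
  have hcompl : volume ((⋃ ij ∈ (Finset.univ : Finset (Fin n × Fin n)),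
      ((cellI n ij.1) ×ˢ (cellI n ij.2) : Set (I01 × I01)))ᶜ) = 0 := by
    have hsub : (⋃ ij ∈ (Finset.univ : Finset (Fin n × Fin n)),
        ((cellI n ij.1) ×ˢ (cellI n ij.2) : Set (I01 × I01)))ᶜ ⊆
        {p : I01 × I01 | (p.1:ℝ) = 1} ∪ {p : I01 × I01 | (p.2:ℝ) = 1} := by
      intro p hp
      simp only [Set.mem_union, Set.mem_setOf_eq]
      by_contra hcon
      rw [not_or] at hcon
      have h1 : (p.1:ℝ) < 1 := lt_of_le_of_ne p.1.2.2 hcon.1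
      have h2 : (p.2:ℝ) < 1 := lt_of_le_of_ne p.2.2.2 hcon.2
      obtain ⟨i, hi, hxi⟩ := cellI_cover hn p.1 h1
      obtain ⟨j, hj, hxj⟩ := cellI_cover hn p.2 h2
      refine hp ?_
      refine Set.mem_biUnion (Finset.mem_univ ((⟨i, hi⟩, ⟨j, hj⟩) : Fin n × Fin n)) ?_
      exact ⟨hxi, hxj⟩
    exact measure_mono_null hsub (le_antisymm ((measure_union_le _ _).trans
      (by rw [volume_coord_one_left, volume_coord_one_right, add_zero])) (zero_le))
  rw [← hbi]
  set BU : Set (I01 × I01) := ⋃ ij ∈ (Finset.univ : Finset (Fin n × Fin n)),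
      ((cellI n ij.1) ×ˢ (cellI n ij.2) : Set (I01 × I01)) with hBU
  have hBUm : MeasurableSet BU := Finset.measurableSet_biUnion _ (fun ij _ => hmeas ij)
  have hadd := integral_add_compl hBUm hf (μ := (volume : Measure (I01 × I01)))
  have hz : ∫ p in BUᶜ, f p = 0 := by
    rw [Measure.restrict_eq_zero.mpr hcompl]
    exact integral_zero_measure f
  rw [← hadd, hz, add_zero]

end Aux

set_option maxHeartbeats 2000000 in
/-- If `W` is not `{0,1}`-valued a.e. and the `W_n` are a.e. `{0,1}`-valued graphons
converging to `W` in cut distance, then `(W_n)` has no `δ₁`-Cauchy subsequence. -/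
theorem no_cauchy_subsequence_of_not_zero_one_valued
    (W : I01 × I01 → ℝ) (hW : IsGraphon W) (hW01 : ∀ p, W p ∈ Set.Icc (0 : ℝ) 1)
    (hWnot : volume {p : I01 × I01 | W p = 0 ∨ W p = 1} < 1)
    (Wseq : ℕ → I01 × I01 → ℝ) (hWseq : ∀ n, IsGraphon (Wseq n))
    (hWseq01 : ∀ n p, Wseq n p ∈ Set.Icc (0 : ℝ) 1)
    (hWseq01ae : ∀ n, ∀ᵐ p ∂(volume : Measure (I01 × I01)), Wseq n p = 0 ∨ Wseq n p = 1)
    (hbox : Filter.Tendsto (fun n => gDeltaBox (Wseq n) W) Filter.atTop (nhds 0)) :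
    ¬ ∃ idx : ℕ → ℕ, StrictMono idx ∧
      ∀ ε : ℝ, 0 < ε → ∃ K : ℕ, ∀ k l : ℕ, K ≤ k → K ≤ l →
        gDelta1 (Wseq (idx k)) (Wseq (idx l)) < ε := by
  rintro ⟨idx, hidx, hC⟩
  classical
  obtain ⟨hWsym, hWbdd, hWmeas⟩ := hW
  have habs01 : ∀ {x : ℝ}, x ∈ Set.Icc (0:ℝ) 1 → |x| ≤ 1 := by
    rintro x ⟨h1, h2⟩; rw [abs_le]; constructor <;> linarith
  have hWint : Integrable W volume :=
    integrable_of_bdd hWmeas.aestronglyMeasurable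
      (Filter.Eventually.of_forall fun p => habs01 (hW01 p))
  -- the functional `∫ min(W, 1-W) = c > 0`
  set mW : I01 × I01 → ℝ := fun q => min (W q) (1 - W q) with hmWdef
  have hmWmeas : AEMeasurable mW volume := hWmeas.min (aemeasurable_const.sub hWmeas)
  have hmW01 : ∀ p, mW p ∈ Set.Icc (0:ℝ) 1 := by
    intro p
    obtain ⟨h1, h2⟩ := hW01 p
    constructor
    · exact le_min h1 (by linarith)
    · exact (min_le_left _ _).trans h2
  have hmWint : Integrable mW volume :=
    integrable_of_bdd hmWmeas.aestronglyMeasurable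
      (Filter.Eventually.of_forall fun p => habs01 (hmW01 p))
  set c : ℝ := ∫ p, mW p with hcdef
  have hcnonneg : 0 ≤ c := integral_nonneg fun p => (hmW01 p).1
  have hcpos : 0 < c := by
    rcases lt_or_eq_of_le hcnonneg with h | h
    · exact h
    · exfalso
      have hae : mW =ᵐ[volume] 0 :=
        (integral_eq_zero_iff_of_nonneg (fun p => (hmW01 p).1) hmWint).mp h.symm
      have hae2 : ∀ᵐ p : I01 × I01, W p = 0 ∨ W p = 1 := by
        filter_upwards [hae] with p hp
        simp only [Pi.zero_apply] at hp
        have hp' : min (W p) (1 - W p) = 0 := hp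
        rcases le_total (W p) (1 - W p) with hle | hle
        · left; rw [min_eq_left hle] at hp'; exact hp'
        · right; rw [min_eq_right hle] at hp'; linarith
      have hcompl : volume ({p : I01 × I01 | W p = 0 ∨ W p = 1}ᶜ) = 0 := by
        rw [ae_iff] at hae2
        exact hae2
      have h1 : (1 : ENNReal) ≤ volume {p : I01 × I01 | W p = 0 ∨ W p = 1} := by
        have := measure_union_le (μ := (volume : Measure (I01 × I01)))
          {p : I01 × I01 | W p = 0 ∨ W p = 1} ({p : I01 × I01 | W p = 0 ∨ W p = 1}ᶜ)
        rw [Set.union_compl_self, hcompl, add_zero, measure_univ] at this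
        exact this
      exact absurd hWnot (not_lt.mpr h1)
  -- select a rapidly Cauchy subsequence
  set K : ℕ → ℕ := fun t => (hC ((1/2)^t) (by positivity)).choose with hKdef
  have hKspec : ∀ t, ∀ k l : ℕ, K t ≤ k → K t ≤ l →
      gDelta1 (Wseq (idx k)) (Wseq (idx l)) < (1/2)^t :=
    fun t => (hC ((1/2)^t) (by positivity)).choose_spec
  set N : ℕ → ℕ := fun t => Nat.rec (K 0) (fun t ih => max (ih+1) (K (t+1))) t with hNdef
  have hNsucc : ∀ t, N (t+1) = max (N t + 1) (K (t+1)) := fun t => rfl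
  have hNmono : StrictMono N := by
    apply strictMono_nat_of_lt_succ
    intro t
    rw [hNsucc t]
    exact lt_of_lt_of_le (Nat.lt_succ_self _) (le_max_left _ _)
  have hNK : ∀ t, K t ≤ N t := by
    intro t
    cases t with
    | zero => exact le_refl _
    | succ t => rw [hNsucc t]; exact le_max_right _ _
  set X : ℕ → I01 × I01 → ℝ := fun t => Wseq (idx (N t)) with hXdef
  have hX01 : ∀ t p, X t p ∈ Set.Icc (0:ℝ) 1 := fun t p => hWseq01 _ _
  have hXmeas : ∀ t, AEMeasurable (X t) volume := fun t => (hWseq _).2.2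
  have hXint : ∀ t, Integrable (X t) volume := fun t =>
    integrable_of_bdd (hXmeas t).aestronglyMeasurable
      (Filter.Eventually.of_forall fun p => habs01 (hX01 t p))
  have hXd : ∀ t, gDelta1 (X t) (X (t+1)) < (1/2)^t := fun t =>
    hKspec t _ _ (hNK t) ((hNK t).trans (hNmono (Nat.lt_succ_self t)).le)
  choose φ hφ0 hφl1 using fun t => exists_of_gDelta1_lt (hXd t)
  set ψ : ℕ → I01 → I01 := fun t => Nat.rec id (fun t ih => φ t ∘ ih) t with hψdef
  have hψ0 : ∀ t, MPhi0 (ψ t) := by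
    intro t
    induction t with
    | zero => exact mphi0_id
    | succ t ih => exact (hφ0 t).comp ih
  set V : ℕ → I01 × I01 → ℝ := fun t => compMap (X t) (ψ t) with hVdef
  have hV01 : ∀ t p, V t p ∈ Set.Icc (0:ℝ) 1 := fun t p => hX01 t _
  have hVmeas : ∀ t, AEMeasurable (V t) volume := fun t =>
    (hψ0 t).2.1.aemeasurable_comp (hXmeas t)
  have hVint : ∀ t, Integrable (V t) volume := fun t =>
    integrable_of_bdd (hVmeas t).aestronglyMeasurable
      (Filter.Eventually.of_forall fun p => habs01 (hV01 t p))
  have hVl1 : ∀ t, ∫ p : I01 × I01, |V t p - V (t+1) p| < (1/2)^t := by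
    intro t
    have hGmeas : AEStronglyMeasurable
        (fun q : I01 × I01 => |X t q - compMap (X (t+1)) (φ t) q|) volume :=
      ((hXmeas t).sub ((hφ0 t).2.1.aemeasurable_comp (hXmeas (t+1)))).aestronglyMeasurable.norm.congr
        (Filter.Eventually.of_forall fun q => (Real.norm_eq_abs _))
    have hident : (fun p : I01 × I01 => |V t p - V (t+1) p|) =
        fun p : I01 × I01 => (fun q : I01 × I01 => |X t q - compMap (X (t+1)) (φ t) q|)
          (ψ t p.1, ψ t p.2) := rfl
    rw [hident, (hψ0 t).2.1.integral_comp hGmeas]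
    exact hφl1 t
  -- almost-everywhere convergence of `V`
  have hDmeas : ∀ t, AEMeasurable (fun p : I01 × I01 => |V t p - V (t+1) p|) volume := fun t =>
    ((hVmeas t).sub (hVmeas (t+1))).norm.congr
      (Filter.Eventually.of_forall fun q => (Real.norm_eq_abs _))
  have hDint : ∀ t, Integrable (fun p : I01 × I01 => |V t p - V (t+1) p|) volume := by
    intro t
    refine integrable_of_bdd (C := 1) (hDmeas t).aestronglyMeasurable
      (Filter.Eventually.of_forall fun p => ?_)
    rw [abs_abs, abs_sub_le_iff]
    obtain ⟨h1, h2⟩ := hV01 t p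
    obtain ⟨h3, h4⟩ := hV01 (t+1) p
    constructor <;> linarith
  have hsummable : ∀ᵐ p : I01 × I01, Summable (fun t => |V t p - V (t+1) p|) := by
    have h1 : ∫⁻ p : I01 × I01, ∑' t, ENNReal.ofReal (|V t p - V (t+1) p|) =
        ∑' t, ∫⁻ p : I01 × I01, ENNReal.ofReal (|V t p - V (t+1) p|) :=
      lintegral_tsum fun t => (hDmeas t).ennreal_ofReal
    have h2 : ∀ t, ∫⁻ p : I01 × I01, ENNReal.ofReal (|V t p - V (t+1) p|) ≤
        ENNReal.ofReal ((1/2)^t) := by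
      intro t
      rw [← ofReal_integral_eq_lintegral_ofReal (hDint t)
        (Filter.Eventually.of_forall fun p => abs_nonneg _)]
      exact ENNReal.ofReal_le_ofReal (hVl1 t).le
    have h3 : ∫⁻ p : I01 × I01, ∑' t, ENNReal.ofReal (|V t p - V (t+1) p|) ≠ ⊤ := by
      rw [h1]
      refine ne_top_of_le_ne_top ?_ (ENNReal.tsum_le_tsum h2)
      rw [← ENNReal.ofReal_tsum_of_nonneg (fun t => by positivity)
        (summable_geometric_of_lt_one (by norm_num) (by norm_num))]
      exact ENNReal.ofReal_ne_top
    have h4 := ae_lt_top' (AEMeasurable.ennreal_tsum fun t => (hDmeas t).ennreal_ofReal) h3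
    filter_upwards [h4] with p hp
    have h5 : Summable (fun t => (ENNReal.ofReal (|V t p - V (t+1) p|)).toReal) :=
      ENNReal.summable_toReal hp.ne
    refine h5.congr fun t => ?_
    exact ENNReal.toReal_ofReal (abs_nonneg _)
  have hcauchy : ∀ᵐ p : I01 × I01, ∃ L : ℝ,
      Filter.Tendsto (fun t => V t p) Filter.atTop (nhds L) := by
    filter_upwards [hsummable] with p hp
    have : CauchySeq (fun t => V t p) := by
      apply cauchySeq_of_summable_dist
      refine hp.congr fun t => ?_
      rw [Real.dist_eq]
    exact cauchySeq_tendsto_of_complete this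
  set U : I01 × I01 → ℝ := fun p =>
    if h : ∃ L : ℝ, Filter.Tendsto (fun t => V t p) Filter.atTop (nhds L)
    then max 0 (min 1 h.choose) else 0 with hUdef
  have hU01 : ∀ p, U p ∈ Set.Icc (0:ℝ) 1 := by
    intro p
    rw [hUdef]
    dsimp only
    split
    · exact ⟨le_max_left _ _, max_le (by norm_num) (min_le_left _ _)⟩
    · exact ⟨le_refl _, by norm_num⟩
  have hUtend : ∀ᵐ p : I01 × I01,
      Filter.Tendsto (fun t => V t p) Filter.atTop (nhds (U p)) := by
    filter_upwards [hcauchy] with p hp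
    obtain ⟨L, hL⟩ := hp
    have hex : ∃ L : ℝ, Filter.Tendsto (fun t => V t p) Filter.atTop (nhds L) := ⟨L, hL⟩
    have hch := hex.choose_spec
    have heq : hex.choose = L := tendsto_nhds_unique hch hL
    have hL01 : L ∈ Set.Icc (0:ℝ) 1 :=
      isClosed_Icc.mem_of_tendsto hL (Filter.Eventually.of_forall fun t => hV01 t p)
    have hUp : U p = L := by
      rw [hUdef]
      dsimp only
      rw [dif_pos hex, heq, min_eq_right hL01.2, max_eq_right hL01.1]
    rw [hUp]
    exact hL
  have hUmeas : AEMeasurable U volume :=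
    aemeasurable_of_tendsto_metrizable_ae Filter.atTop hVmeas hUtend
  have hUint : Integrable U volume :=
    integrable_of_bdd hUmeas.aestronglyMeasurable
      (Filter.Eventually.of_forall fun p => habs01 (hU01 p))
  have hV01ae : ∀ t, ∀ᵐ p : I01 × I01, V t p = 0 ∨ V t p = 1 := by
    intro t
    have h := hWseq01ae (idx (N t))
    exact (hψ0 t).2.1.ae_comp (P := fun q => X t q = 0 ∨ X t q = 1) h
  have hU01ae : ∀ᵐ p : I01 × I01, U p = 0 ∨ U p = 1 := by
    have hall : ∀ᵐ p : I01 × I01, ∀ t, V t p = 0 ∨ V t p = 1 := ae_all_iff.mpr hV01ae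
    filter_upwards [hall, hUtend] with p h1 h2
    have hcl : IsClosed ({0, 1} : Set ℝ) := ((Set.finite_singleton (1:ℝ)).insert 0).isClosed
    have : U p ∈ ({0, 1} : Set ℝ) := by
      refine hcl.mem_of_tendsto h2 (Filter.Eventually.of_forall fun t => ?_)
      rcases h1 t with h | h
      · rw [h]; exact Set.mem_insert _ _
      · rw [h]; exact Set.mem_insert_of_mem _ rfl
    simpa using this
  have hUVl1 : Filter.Tendsto (fun t => ∫ p : I01 × I01, |U p - V t p|)
      Filter.atTop (nhds 0) := by
    have h0 : (0:ℝ) = ∫ p : I01 × I01, (0:ℝ) := by simp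
    rw [h0]
    refine tendsto_integral_of_dominated_convergence (bound := fun _ => (1:ℝ))
      (fun t => ((hUmeas.sub (hVmeas t)).norm.congr
        (Filter.Eventually.of_forall fun q => (Real.norm_eq_abs _))).aestronglyMeasurable)
      (integrable_const 1) (fun t => Filter.Eventually.of_forall fun p => ?_) ?_
    · rw [Real.norm_eq_abs, abs_abs, abs_sub_le_iff]
      obtain ⟨h1, h2⟩ := hU01 p
      obtain ⟨h3, h4⟩ := hV01 t p
      constructor <;> · linarith
    · filter_upwards [hUtend] with p hp
      have := ((tendsto_const_nhds (x := U p)).sub hp).abs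
      simpa using this
  -- composition maps realizing small cut norm against `W`
  have hgbox : Filter.Tendsto (fun t => gDeltaBox (X t) W) Filter.atTop (nhds 0) :=
    hbox.comp (hidx.comp hNmono).tendsto_atTop
  have hXboxlt : ∀ t, gDeltaBox (X t) W < gDeltaBox (X t) W + (1/2)^t :=
    fun t => lt_add_of_pos_right _ (by positivity)
  choose φ' hφ'0 hφ'cut using fun t => exists_of_gDeltaBox_lt (hXboxlt t)
  set χ : ℕ → I01 → I01 := fun t => φ' t ∘ ψ t with hχdef
  have hχ0 : ∀ t, MPhi0 (χ t) := fun t => (hφ'0 t).comp (hψ0 t)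
  have hWχmeas : ∀ t, AEMeasurable (compMap W (χ t)) volume := fun t =>
    (hχ0 t).2.1.aemeasurable_comp hWmeas
  have hWχ01 : ∀ t p, compMap W (χ t) p ∈ Set.Icc (0:ℝ) 1 := fun t p => hW01 _
  have hWχint : ∀ t, Integrable (compMap W (χ t)) volume := fun t =>
    integrable_of_bdd (hWχmeas t).aestronglyMeasurable
      (Filter.Eventually.of_forall fun p => habs01 (hWχ01 t p))
  have hHint : ∀ t, Integrable (fun q : I01 × I01 => X t q - compMap W (φ' t) q) volume :=
    fun t => (hXint t).sub (integrable_of_bdd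
      ((hφ'0 t).2.1.aemeasurable_comp hWmeas).aestronglyMeasurable
      (Filter.Eventually.of_forall fun p => habs01 (hW01 _)))
  set e : ℕ → ℝ := fun t =>
    (∫ p : I01 × I01, |U p - V t p|) + (gDeltaBox (X t) W + (1/2)^t) with hedef
  have he0 : Filter.Tendsto e Filter.atTop (nhds 0) := by
    have h2 : Filter.Tendsto (fun t : ℕ => ((1:ℝ)/2)^t) Filter.atTop (nhds 0) :=
      tendsto_pow_atTop_nhds_zero_of_lt_one (by norm_num) (by norm_num)
    rw [hedef, show (0:ℝ) = 0 + (0 + 0) by norm_num]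
    exact hUVl1.add (hgbox.add h2)
  have hkey : ∀ (t : ℕ) {S T : Set I01}, MeasurableSet S → MeasurableSet T →
      |∫ p in S ×ˢ T, (U p - compMap W (χ t) p)| ≤ e t := by
    intro t S T hS hT
    have hfun : (fun p : I01 × I01 => U p - compMap W (χ t) p) =
        fun p => (U p - V t p) + (V t p - compMap W (χ t) p) := by
      funext p; ring
    have hint1 : IntegrableOn (fun p : I01 × I01 => U p - V t p) (S ×ˢ T) volume :=
      (hUint.sub (hVint t)).integrableOn
    have hint2 : IntegrableOn (fun p : I01 × I01 => V t p - compMap W (χ t) p)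
        (S ×ˢ T) volume := ((hVint t).sub (hWχint t)).integrableOn
    rw [hfun, integral_add hint1 hint2]
    refine (abs_add_le _ _).trans (add_le_add ?_ ?_)
    · exact abs_setIntegral_le (hUint.sub (hVint t)) _
    · have hident : (fun p : I01 × I01 => V t p - compMap W (χ t) p) =
          fun p : I01 × I01 => (fun q : I01 × I01 => X t q - compMap W (φ' t) q)
            (ψ t p.1, ψ t p.2) := rfl
      have h1 : |∫ p in S ×ˢ T, (V t p - compMap W (χ t) p)| ≤
          cutNorm (fun q : I01 × I01 => X t q - compMap W (φ' t) q) := by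
        rw [hident]
        exact abs_setIntegral_comp_le_cutNorm (hψ0 t) (hHint t) hS hT
      exact h1.trans (hφ'cut t).le
  -- the a.e. 0/1 set underlying `U`
  set U₀ : I01 × I01 → ℝ := hUmeas.mk U with hU₀def
  have hU₀meas : Measurable U₀ := hUmeas.measurable_mk
  have hUU₀ : U =ᵐ[volume] U₀ := hUmeas.ae_eq_mk
  set A : Set (I01 × I01) := U₀ ⁻¹' (Set.Ioi (1/2 : ℝ)) with hAdef
  have hAmeas : MeasurableSet A := hU₀meas measurableSet_Ioi
  have hUA : ∀ᵐ p : I01 × I01, U p = Set.indicator A (fun _ => (1:ℝ)) p := by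
    filter_upwards [hUU₀, hU01ae] with p h1 h2
    rcases h2 with h | h
    · have hmem : p ∉ A := by
        rw [hAdef]
        simp only [Set.mem_preimage, Set.mem_Ioi, not_lt]
        rw [← h1, h]; norm_num
      rw [Set.indicator_of_notMem hmem, h]
    · have hmem : p ∈ A := by
        rw [hAdef]
        simp only [Set.mem_preimage, Set.mem_Ioi]
        rw [← h1, h]; norm_num
      rw [Set.indicator_of_mem hmem, h]
  have hUset : ∀ s : Set (I01 × I01), MeasurableSet s →
      ∫ p in s, U p = (volume (A ∩ s)).toReal := by
    intro s hs
    have h1 : ∫ p in s, U p = ∫ p in s, Set.indicator A (fun _ => (1:ℝ)) p :=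
      integral_congr_ae (ae_restrict_of_ae hUA)
    rw [h1, setIntegral_indicator hAmeas, setIntegral_const, smul_eq_mul, mul_one,
      Set.inter_comm]
    rfl
  -- regularity of the measure : open `O` and compact `Kc`
  have hη : (ENNReal.ofReal (c/8)) ≠ 0 := (ENNReal.ofReal_pos.mpr (by positivity)).ne'
  obtain ⟨O, hAO, hOopen, hO⟩ := Set.exists_isOpen_lt_add (μ := (volume : Measure (I01 × I01))) A (measure_ne_top _ _) hη
  obtain ⟨Kc, hKA, hKcomp, hKlt⟩ := hAmeas.exists_isCompact_lt_add (μ := (volume : Measure (I01 × I01))) (measure_ne_top _ _) hη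
  have hKm : MeasurableSet Kc := hKcomp.measurableSet
  have hKO : Kc ⊆ O := hKA.trans hAO
  have hOK : volume (O \ Kc) < ENNReal.ofReal (c/4) := by
    have h2 : volume (O \ Kc) = volume O - volume Kc :=
      measure_diff hKO hKm.nullMeasurableSet (measure_ne_top _ _)
    rw [h2, ENNReal.sub_lt_iff_lt_right (measure_ne_top _ _) (measure_mono hKO)]
    calc volume O < volume A + ENNReal.ofReal (c/8) := hO
      _ < (volume Kc + ENNReal.ofReal (c/8)) + ENNReal.ofReal (c/8) :=
        ENNReal.add_lt_add_right ENNReal.ofReal_ne_top hKlt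
      _ = volume Kc + (ENNReal.ofReal (c/8) + ENNReal.ofReal (c/8)) := by rw [add_assoc]
      _ = volume Kc + ENNReal.ofReal (c/4) := by
        rw [← ENNReal.ofReal_add (by positivity) (by positivity)]
        congr 1
        ring
      _ = ENNReal.ofReal (c/4) + volume Kc := add_comm _ _
  have hOKr : (volume (O \ Kc)).toReal < c/4 := by
    rw [← ENNReal.lt_ofReal_iff_toReal_lt (measure_ne_top _ _)]
    exact hOK
  obtain ⟨δ, hδ0, hδ⟩ := hKcomp.exists_thickening_subset_open hOopen hKO
  obtain ⟨n₀, hn₀⟩ := exists_nat_one_div_lt hδ0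
  set n : ℕ := n₀ + 1 with hndef
  have hnpos : 0 < n := Nat.succ_pos _
  have hnR : (0:ℝ) < n := by exact_mod_cast hnpos
  have hnδ : 1/(n:ℝ) < δ := by
    rw [hndef]
    push_cast
    exact hn₀
  have hcellvol : ∀ i j : Fin n,
      volume ((cellI n i) ×ˢ (cellI n j) : Set (I01 × I01)) =
        ENNReal.ofReal (1/(n:ℝ)) * ENNReal.ofReal (1/(n:ℝ)) := by
    intro i j
    rw [show (volume : Measure (I01 × I01)) = (volume : Measure I01).prod volume from rfl,
      Measure.prod_prod, cellI_volume hnpos i.2, cellI_volume hnpos j.2]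
  set M : ℝ := 1/(n:ℝ) * (1/(n:ℝ)) with hMdef
  have hMeq : ∀ i j : Fin n,
      (volume ((cellI n i) ×ˢ (cellI n j) : Set (I01 × I01))).toReal = M := by
    intro i j
    rw [hcellvol i j, ENNReal.toReal_mul, ENNReal.toReal_ofReal (by positivity)]
  -- choose `t` with `e t` small
  have hcn : (0:ℝ) < c/(4 * (n:ℝ)^2) := by positivity
  obtain ⟨t, ht⟩ := (he0.eventually_lt_const hcn).exists
  -- abbreviations for this fixed `t`
  have hmWtint : Integrable (fun p : I01 × I01 => mW (χ t p.1, χ t p.2)) volume :=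
    integrable_of_bdd ((hχ0 t).2.1.aemeasurable_comp hmWmeas).aestronglyMeasurable
      (Filter.Eventually.of_forall fun p => habs01 (hmW01 _))
  have hintc : ∫ p : I01 × I01, mW (χ t p.1, χ t p.2) = c :=
    ((hχ0 t).2.1.integral_comp hmWmeas.aestronglyMeasurable)
  have hsum1 : ∑ ij : Fin n × Fin n,
      ∫ p in ((cellI n ij.1) ×ˢ (cellI n ij.2) : Set (I01 × I01)), mW (χ t p.1, χ t p.2) = c :=
    (sum_cell_integral hnpos hmWtint).trans hintc
  -- cell averages
  set aa : Fin n × Fin n → ℝ := fun ij =>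
    ∫ p in ((cellI n ij.1) ×ˢ (cellI n ij.2) : Set (I01 × I01)), U p with haadef
  set bb : Fin n × Fin n → ℝ := fun ij =>
    ∫ p in ((cellI n ij.1) ×ˢ (cellI n ij.2) : Set (I01 × I01)), compMap W (χ t) p with hbbdef
  -- step (1) : `c ≤ ∑ min (bb, M - bb)`
  have h1 : c ≤ ∑ ij : Fin n × Fin n, min (bb ij) (M - bb ij) := by
    rw [← hsum1]
    refine Finset.sum_le_sum fun ij _ => ?_
    have hWχ : mW ∘ (fun p : I01 × I01 => (χ t p.1, χ t p.2)) =
        fun p => min (compMap W (χ t) p) (1 - compMap W (χ t) p) := rfl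
    refine le_min ?_ ?_
    · refine le_trans (integral_mono hmWtint.integrableOn ((hWχint t).integrableOn) ?_) ?_
      · intro p; exact min_le_left _ _
      · rw [hbbdef]
    · have hconst : ∫ _p in ((cellI n ij.1) ×ˢ (cellI n ij.2) : Set (I01 × I01)), (1:ℝ) = M := by
        rw [setIntegral_const, smul_eq_mul, mul_one, measureReal_def, hMeq]
      have hsubint : ∫ p in ((cellI n ij.1) ×ˢ (cellI n ij.2) : Set (I01 × I01)),
          ((1:ℝ) - compMap W (χ t) p) = M - bb ij := by
        rw [integral_sub ((integrable_const (1:ℝ)).integrableOn) ((hWχint t).integrableOn),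
          hconst, hbbdef]
      rw [← hsubint]
      refine integral_mono hmWtint.integrableOn
        (((integrable_const (1:ℝ)).sub (hWχint t)).integrableOn) ?_
      intro p; exact min_le_right _ _
  -- step (2) : cut-norm comparison of `aa` and `bb`
  have h2 : ∀ ij : Fin n × Fin n, |aa ij - bb ij| ≤ e t := by
    intro ij
    have heq : aa ij - bb ij = ∫ p in ((cellI n ij.1) ×ˢ (cellI n ij.2) : Set (I01 × I01)),
        (U p - compMap W (χ t) p) := by
      rw [haadef, hbbdef,
        integral_sub hUint.integrableOn ((hWχint t).integrableOn)]
    rw [heq]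
    exact hkey t (cellI_measurable _ _) (cellI_measurable _ _)
  have h2' : ∀ ij : Fin n × Fin n,
      min (bb ij) (M - bb ij) ≤ min (aa ij) (M - aa ij) + e t := by
    intro ij
    have h3 := abs_le.mp (h2 ij)
    have h4 : bb ij ≤ aa ij + e t := by linarith [h3.1, h3.2]
    have h5 : M - bb ij ≤ (M - aa ij) + e t := by linarith [h3.1, h3.2]
    calc min (bb ij) (M - bb ij) ≤ min (aa ij + e t) ((M - aa ij) + e t) := min_le_min h4 h5
      _ = min (aa ij) (M - aa ij) + e t := min_add_add_right _ _ _
  -- step (3) : per-cell regularity bound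
  have h3 : ∀ ij : Fin n × Fin n, min (aa ij) (M - aa ij) ≤
      (volume ((O \ Kc) ∩ ((cellI n ij.1) ×ˢ (cellI n ij.2) : Set (I01 × I01)))).toReal := by
    intro ij
    have hcm : MeasurableSet ((cellI n ij.1) ×ˢ (cellI n ij.2) : Set (I01 × I01)) :=
      (cellI_measurable _ _).prod (cellI_measurable _ _)
    have haval : aa ij = (volume (A ∩ ((cellI n ij.1) ×ˢ (cellI n ij.2)))).toReal := by
      rw [haadef]; exact hUset _ hcm
    have hdiff : M - aa ij =
        (volume (((cellI n ij.1) ×ˢ (cellI n ij.2) : Set (I01 × I01)) \ A)).toReal := by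
      have hsum := measure_inter_add_diff (μ := (volume : Measure (I01 × I01)))
        ((cellI n ij.1) ×ˢ (cellI n ij.2) : Set (I01 × I01)) hAmeas
      have h6 : (volume (((cellI n ij.1) ×ˢ (cellI n ij.2) : Set (I01 × I01)) ∩ A)).toReal +
          (volume (((cellI n ij.1) ×ˢ (cellI n ij.2) : Set (I01 × I01)) \ A)).toReal = M := by
        rw [← ENNReal.toReal_add (measure_ne_top _ _) (measure_ne_top _ _), hsum, hMeq]
      rw [haval, Set.inter_comm]
      linarith
    rcases Set.eq_empty_or_nonempty
        (Kc ∩ ((cellI n ij.1) ×ˢ (cellI n ij.2) : Set (I01 × I01))) with hemp | hne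
    · refine (min_le_left _ _).trans ?_
      rw [haval]
      refine ENNReal.toReal_mono (measure_ne_top _ _) (measure_mono ?_)
      rintro x ⟨hxA, hxc⟩
      refine ⟨⟨hAO hxA, fun hxK => ?_⟩, hxc⟩
      rw [Set.eq_empty_iff_forall_notMem] at hemp
      exact hemp x ⟨hxK, hxc⟩
    · obtain ⟨q, hqK, hqc⟩ := hne
      have hcellO : ((cellI n ij.1) ×ˢ (cellI n ij.2) : Set (I01 × I01)) ⊆ O := by
        intro p hp
        refine hδ ?_
        rw [Metric.mem_thickening_iff]
        refine ⟨q, hqK, ?_⟩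
        rw [Prod.dist_eq]
        have d1 : dist p.1 q.1 < 1/(n:ℝ) := cellI_dist hp.1 hqc.1
        have d2 : dist p.2 q.2 < 1/(n:ℝ) := cellI_dist hp.2 hqc.2
        exact lt_trans (max_lt d1 d2) hnδ
      refine (min_le_right _ _).trans ?_
      rw [hdiff]
      refine ENNReal.toReal_mono (measure_ne_top _ _) (measure_mono ?_)
      rintro x ⟨hxc, hxA⟩
      exact ⟨⟨hcellO hxc, fun hxK => hxA (hKA hxK)⟩, hxc⟩
  -- step (4) : summing the regularity bound
  have h4 : ∑ ij : Fin n × Fin n,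
      (volume ((O \ Kc) ∩ ((cellI n ij.1) ×ˢ (cellI n ij.2) : Set (I01 × I01)))).toReal ≤
      (volume (O \ Kc)).toReal := by
    have hdisj2 : (↑(Finset.univ : Finset (Fin n × Fin n)) : Set (Fin n × Fin n)).PairwiseDisjoint
        (fun ij : Fin n × Fin n =>
          (O \ Kc) ∩ ((cellI n ij.1) ×ˢ (cellI n ij.2) : Set (I01 × I01))) := by
      intro ij _ kl _ hne
      refine Set.disjoint_left.mpr ?_
      rintro p ⟨_, h1p, h2p⟩ ⟨_, h3p, h4p⟩
      by_cases hik : (ij.1 : ℕ) = (kl.1 : ℕ)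
      · by_cases hjl : (ij.2 : ℕ) = (kl.2 : ℕ)
        · exact hne (Prod.ext (Fin.ext hik) (Fin.ext hjl))
        · exact (Set.disjoint_left.mp (cellI_disjoint hnpos hjl)) h2p h4p
      · exact (Set.disjoint_left.mp (cellI_disjoint hnpos hik)) h1p h3p
    have hmeas2 : ∀ ij : Fin n × Fin n, ij ∈ (Finset.univ : Finset (Fin n × Fin n)) →
        MeasurableSet ((O \ Kc) ∩ ((cellI n ij.1) ×ˢ (cellI n ij.2) : Set (I01 × I01))) :=
      fun ij _ => (hOopen.measurableSet.diff hKm).inter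
        ((cellI_measurable _ _).prod (cellI_measurable _ _))
    have hbiu := measure_biUnion_finset (μ := (volume : Measure (I01 × I01))) hdisj2 hmeas2
    have hstep : ∑ ij : Fin n × Fin n,
        (volume ((O \ Kc) ∩ ((cellI n ij.1) ×ˢ (cellI n ij.2) : Set (I01 × I01)))).toReal =
        (∑ ij : Fin n × Fin n,
          volume ((O \ Kc) ∩ ((cellI n ij.1) ×ˢ (cellI n ij.2) : Set (I01 × I01)))).toReal :=
      (ENNReal.toReal_sum (fun ij _ => measure_ne_top _ _)).symm
    rw [hstep, ← hbiu]
    refine ENNReal.toReal_mono (measure_ne_top _ _) (measure_mono ?_)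
    intro x hx
    simp only [Set.mem_iUnion] at hx
    obtain ⟨ij, _, hxm, _⟩ := hx
    exact hxm
  -- final chain
  have hsum2 : ∑ ij : Fin n × Fin n, (min (aa ij) (M - aa ij) + e t) =
      (∑ ij : Fin n × Fin n, min (aa ij) (M - aa ij)) + (n:ℝ)^2 * e t := by
    rw [Finset.sum_add_distrib, Finset.sum_const, Finset.card_univ]
    congr 1
    rw [Fintype.card_prod, Fintype.card_fin, nsmul_eq_mul]
    push_cast
    ring
  have hfinal : c ≤ (volume (O \ Kc)).toReal + (n:ℝ)^2 * e t := by
    have hs3 := Finset.sum_le_sum (fun ij (_ : ij ∈ Finset.univ) => h3 ij)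
    have hs2 := Finset.sum_le_sum (fun ij (_ : ij ∈ Finset.univ) => h2' ij)
    rw [hsum2] at hs2
    linarith [h1, hs2, hs3, h4]
  have hlast : (n:ℝ)^2 * e t < c/4 := by
    have h7 : (n:ℝ)^2 * e t < (n:ℝ)^2 * (c/(4*(n:ℝ)^2)) :=
      mul_lt_mul_of_pos_left ht (by positivity)
    have h8 : (n:ℝ)^2 * (c/(4*(n:ℝ)^2)) = c/4 := by
      field_simp
    linarith
  have hcontr : c < c/4 + c/4 := by
    calc c ≤ (volume (O \ Kc)).toReal + (n:ℝ)^2 * e t := hfinal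
      _ < c/4 + c/4 := by exact add_lt_add hOKr hlast
  linarith only [hcontr, hcpos]


end
end

section
/- For every graphon W with values in [0,1] there is a graphon U with values in [0,1] such that W = U almost everywhere and, for every finite simple graph F, either t(F,U) > 0 or U is F-free. -/
open MeasureTheory Set
open scoped symmDiff

noncomputable section

/-- A `[0,1]`-valued graphon `U` is `F`-free if every tuple of points misses some edge. -/
def GraphonFree {k : ℕ} (F : SimpleGraph (Fin k)) (U : I01 × I01 → ℝ) : Prop :=
  ∀ x : Fin k → I01, ∃ i j : Fin k, F.Adj i j ∧ U (x i, x j) = 0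

lemma mp_coe : MeasurePreserving (fun t : I01 => (t : ℝ)) volume (volume.restrict (Icc 0 1)) := by
  refine ⟨measurable_subtype_coe, ?_⟩
  rw [unitInterval.volume_def, map_comap_subtype_coe measurableSet_Icc]

lemma mp_coe2 : MeasurePreserving (fun p : I01 × I01 => ((p.1 : ℝ), (p.2 : ℝ)))
    volume (volume.restrict ((Icc 0 1) ×ˢ (Icc 0 1))) := by
  have h := (mp_coe.prod mp_coe)
  rwa [Measure.prod_restrict, ← Measure.volume_eq_prod, ← Measure.volume_eq_prod] at h

lemma vol_ball_prod (q : ℝ × ℝ) (r : ℝ) :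
    volume (Metric.closedBall q r) = ENNReal.ofReal (2*r) * ENNReal.ofReal (2*r) := by
  have : Metric.closedBall q r = Metric.closedBall q.1 r ×ˢ Metric.closedBall q.2 r := by
    rw [← closedBall_prod_same]
  rw [this, Measure.volume_eq_prod, Measure.prod_prod, Real.volume_closedBall, Real.volume_closedBall]

lemma interval_lower {c δ : ℝ} (hc : c ∈ Icc (0:ℝ) 1) (hδ0 : 0 < δ) (hδ : δ ≤ 1/2) :
    ENNReal.ofReal δ ≤ volume.restrict (Icc 0 1) (Metric.closedBall c δ) := by
  rw [Measure.restrict_apply' measurableSet_Icc, Real.closedBall_eq_Icc, Icc_inter_Icc,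
    Real.volume_Icc]
  apply ENNReal.ofReal_le_ofReal
  rcases le_or_gt c (1/2) with h | h
  · have h1 : c + δ ≤ 1 := by linarith
    have h2 : max (c - δ) 0 ≤ c := by
      apply max_le (by linarith) hc.1
    have h3 : min (c + δ) 1 = c + δ := min_eq_left h1
    rw [h3]; linarith
  · have h1 : (0:ℝ) ≤ c - δ := by linarith
    have h2 : max (c - δ) 0 = c - δ := max_eq_left h1
    have h3 : c ≤ min (c + δ) 1 := le_min (by linarith) hc.2
    rw [h2]; linarith

lemma ball_est {T D : Set (ℝ × ℝ)} (hT : MeasurableSet T) (hTD : volume (T \ D) = 0)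
    {q : ℝ × ℝ} {r : ℝ} (hr : 0 < r) {η : ENNReal} (hη1 : η ≤ 1)
    (h : 1 - η < volume (T ∩ Metric.closedBall q r) / volume (Metric.closedBall q r)) :
    volume (Metric.closedBall q r \ (T ∩ D)) ≤ η * volume (Metric.closedBall q r) := by
  set B := Metric.closedBall q r with hB
  have hVform := vol_ball_prod q r
  have hV0 : volume B ≠ 0 := by
    rw [hVform]
    simp only [ne_eq, mul_eq_zero, ENNReal.ofReal_eq_zero, not_or, not_le]
    constructor <;> linarith
  have hVt : volume B ≠ ⊤ := by
    rw [hVform]; exact ENNReal.mul_ne_top ENNReal.ofReal_ne_top ENNReal.ofReal_ne_top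
  have key : (1 - η) * volume B ≤ volume (B ∩ T) := by
    rw [inter_comm]
    exact (ENNReal.mul_lt_of_lt_div h).le
  have hsplit : volume (B \ T) + volume (B ∩ T) = volume B := measure_diff_add_inter B hT
  have hBT : volume (B \ T) ≤ η * volume B := by
    have h1 : volume (B \ T) + (1 - η) * volume B ≤ η * volume B + (1 - η) * volume B := by
      have : volume (B \ T) + (1 - η) * volume B ≤ volume B := by
        calc volume (B \ T) + (1 - η) * volume B ≤ volume (B \ T) + volume (B ∩ T) :=
              add_le_add le_rfl key
          _ = volume B := hsplit
      have h2 : η * volume B + (1 - η) * volume B = volume B := by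
        rw [← add_mul, add_tsub_cancel_of_le hη1, one_mul]
      rw [h2]; exact this
    have hfin : (1 - η) * volume B ≠ ⊤ :=
      ENNReal.mul_ne_top (ne_top_of_le_ne_top ENNReal.one_ne_top tsub_le_self) hVt
    exact (ENNReal.add_le_add_iff_right hfin).mp h1
  calc volume (B \ (T ∩ D)) ≤ volume ((B \ T) ∪ (T \ D)) := by
        apply measure_mono; intro z hz
        rcases hz with ⟨hzB, hzn⟩
        by_cases hzT : z ∈ T
        · exact Or.inr ⟨hzT, fun hD => hzn ⟨hzT, hD⟩⟩
        · exact Or.inl ⟨hzB, hzT⟩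
    _ ≤ volume (B \ T) + volume (T \ D) := measure_union_le _ _
    _ = volume (B \ T) := by rw [hTD, add_zero]
    _ ≤ η * volume B := hBT


lemma pi_pair_split {k : ℕ} {i j : Fin k} (hij : i ≠ j)
    {C : Set (I01 × I01)} (hC : MeasurableSet C)
    {B : Fin k → Set I01} (hB : ∀ l, MeasurableSet (B l)) :
    volume {x : Fin k → I01 | (x i, x j) ∈ C ∧ ∀ l, ¬(l = i ∨ l = j) → x l ∈ B l}
      = volume C *
        ∏ l ∈ Finset.univ.filter (fun l => ¬(l = i ∨ l = j)), volume (B l) := by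
  set p : Fin k → Prop := fun l => l = i ∨ l = j with hp
  haveI : DecidablePred p := fun l => inferInstanceAs (Decidable (l = i ∨ l = j))
  set ii : Subtype p := ⟨i, Or.inl rfl⟩
  set jj : Subtype p := ⟨j, Or.inr rfl⟩
  have hne : ii ≠ jj := by
    intro h; exact hij (congrArg Subtype.val h)
  set Φ : (∀ _ : Subtype p, I01) → I01 × I01 := fun y => (y ii, y jj) with hΦ
  have hΦm : Measurable Φ := (measurable_pi_apply ii).prodMk (measurable_pi_apply jj)
  -- Step A : map Φ volume = volume
  have hmap : Measure.map Φ (volume : Measure (∀ _ : Subtype p, I01)) = volume := by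
    rw [Measure.volume_eq_prod]
    refine (Measure.prod_eq fun s t hs ht => ?_).symm
    rw [Measure.map_apply hΦm (hs.prod ht)]
    have hpre : Φ ⁻¹' (s ×ˢ t) = Set.pi univ (fun l => if l = ii then s else t) := by
      ext y
      simp only [mem_preimage, mem_prod, Set.mem_pi, mem_univ, true_implies, hΦ]
      constructor
      · rintro ⟨h1, h2⟩ l
        rcases l with ⟨l, hl⟩
        rcases hl with hl | hl
        · have : (⟨l, Or.inl hl⟩ : Subtype p) = ii := Subtype.ext hl
          rw [show (⟨l, Or.inl hl⟩ : Subtype p) = ii from this, if_pos rfl]; exact h1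
        · have : (⟨l, Or.inr hl⟩ : Subtype p) = jj := Subtype.ext hl
          rw [show (⟨l, Or.inr hl⟩ : Subtype p) = jj from this, if_neg (Ne.symm hne)]
          exact h2
      · intro h
        constructor
        · have := h ii; rwa [if_pos rfl] at this
        · have := h jj; rwa [if_neg (Ne.symm hne)] at this
    rw [hpre, volume_pi, Measure.pi_pi]
    have huniv : (Finset.univ : Finset (Subtype p)) = {ii, jj} := by
      ext ⟨l, hl⟩
      simp only [Finset.mem_univ, Finset.mem_insert, Finset.mem_singleton, true_iff]
      rcases hl with hl | hl
      · exact Or.inl (Subtype.ext hl)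
      · exact Or.inr (Subtype.ext hl)
    rw [huniv, Finset.prod_pair hne, if_pos rfl, if_neg (Ne.symm hne)]
  -- Step B : main set via piEquivPiSubtypeProd
  set e := MeasurableEquiv.piEquivPiSubtypeProd (fun _ : Fin k => I01) p
  have hS₁ : MeasurableSet (Φ ⁻¹' C) := hΦm hC
  have hS₂ : MeasurableSet (Set.pi univ (fun l : {l // ¬ p l} => B l.val)) :=
    MeasurableSet.univ_pi (fun l => hB l.val)
  have hset : {x : Fin k → I01 | (x i, x j) ∈ C ∧ ∀ l, ¬(l = i ∨ l = j) → x l ∈ B l}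
      = e ⁻¹' ((Φ ⁻¹' C) ×ˢ (Set.pi univ (fun l : {l // ¬ p l} => B l.val))) := by
    ext x
    simp only [mem_setOf_eq, mem_preimage, mem_prod, Set.mem_pi, mem_univ, true_implies,
      MeasurableEquiv.piEquivPiSubtypeProd, Equiv.piEquivPiSubtypeProd,
      MeasurableEquiv.coe_mk, Equiv.coe_fn_mk, hΦ]
    constructor
    · rintro ⟨h1, h2⟩
      exact ⟨h1, fun l => h2 l.val l.2⟩
    · rintro ⟨h1, h2⟩
      exact ⟨h1, fun l hl => h2 ⟨l, hl⟩⟩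
  rw [hset, (volume_preserving_piEquivPiSubtypeProd (fun _ : Fin k => I01) p).measure_preimage
    ((hS₁.prod hS₂).nullMeasurableSet)]
  rw [Measure.volume_eq_prod, Measure.prod_prod]
  congr 1
  · rw [← hmap, Measure.map_apply hΦm hC]
  · rw [volume_pi, Measure.pi_pi]
    exact (Finset.prod_subtype _ (fun l => by simp [hp, not_or]) (fun l => volume (B l))).symm


lemma density_pos {k : ℕ} (U : I01 × I01 → ℝ) (hUm : Measurable U)
    (hU0 : ∀ p, 0 ≤ U p) (hU1 : ∀ p, U p ≤ 1)
    (T D : Set (ℝ × ℝ)) (hT : MeasurableSet T) (hD : MeasurableSet D)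
    (hTD : volume (T \ D) = 0)
    (hUc : ∀ p : I01 × I01, U p ≠ 0 → (((p.1 : ℝ), (p.2 : ℝ)) ∈ T ∩ D))
    (hUpos : ∀ p : I01 × I01, (((p.1 : ℝ), (p.2 : ℝ)) ∈ T ∩ D) → 0 < U p)
    (hdens : ∀ q ∈ D, Filter.Tendsto
      (fun r => volume (T ∩ Metric.closedBall q r) / volume (Metric.closedBall q r))
      (nhdsWithin 0 (Ioi 0)) (nhds 1))
    (E : Finset (Fin k × Fin k)) (hE : ∀ e ∈ E, e.1 ≠ e.2)
    (x : Fin k → I01) (hx : ∀ e ∈ E, U (x e.1, x e.2) ≠ 0) :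
    0 < ∫ y : Fin k → I01, ∏ e ∈ E, U (y e.1, y e.2) := by
  classical
  haveI : IsProbabilityMeasure (volume : Measure (Fin k → I01)) :=
    ⟨by rw [← Set.pi_univ Set.univ, volume_pi, Measure.pi_pi]; simp⟩
  set f : (Fin k → I01) → ℝ := fun y => ∏ e ∈ E, U (y e.1, y e.2) with hf
  have hfm : Measurable f :=
    Finset.measurable_prod _ fun e _ =>
      hUm.comp ((measurable_pi_apply _).prodMk (measurable_pi_apply _))
  have hf0 : ∀ y, 0 ≤ f y := fun y => Finset.prod_nonneg fun e _ => hU0 _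
  have hf1 : ∀ y, f y ≤ 1 := fun y =>
    Finset.prod_le_one (fun e _ => hU0 _) (fun e _ => hU1 _)
  have hfi : Integrable f volume := by
    refine (integrable_const (1:ℝ)).mono' hfm.aestronglyMeasurable ?_
    exact Filter.Eventually.of_forall fun y => by
      rw [Real.norm_eq_abs, abs_of_nonneg (hf0 y)]; exact hf1 y
  rw [integral_pos_iff_support_of_nonneg hf0 hfi]
  -- parameters
  set κ : ENNReal := (E.card : ENNReal) * 2 ^ k with hκ
  have hκt : κ ≠ ⊤ := ENNReal.mul_ne_top (ENNReal.natCast_ne_top _)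
    (ENNReal.pow_ne_top ENNReal.ofNat_ne_top)
  set η : ENNReal := (κ + 1)⁻¹ with hη
  have hκ1t : κ + 1 ≠ ⊤ := ENNReal.add_ne_top.mpr ⟨hκt, ENNReal.one_ne_top⟩
  have hκ10 : κ + 1 ≠ 0 := by simp
  have hη0 : η ≠ 0 := ENNReal.inv_ne_zero.mpr hκ1t
  have hη1 : η ≤ 1 := by
    rw [hη]
    exact ENNReal.inv_le_one.mpr (le_add_self)
  have hetalt : 1 - η < 1 := ENNReal.sub_lt_self ENNReal.one_ne_top one_ne_zero hη0
  -- the density points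
  set q : Fin k × Fin k → ℝ × ℝ := fun e => ((x e.1 : ℝ), (x e.2 : ℝ)) with hq
  have hqTD : ∀ e ∈ E, q e ∈ T ∩ D := fun e he => hUc _ (hx e he)
  -- choose δ
  have hev : ∀ᶠ r in nhdsWithin (0:ℝ) (Ioi 0),
      (r ∈ Ioi (0:ℝ) ∧ r < 1/2) ∧ ∀ e ∈ E,
        1 - η < volume (T ∩ Metric.closedBall (q e) r) / volume (Metric.closedBall (q e) r) := by
    refine Filter.Eventually.and (Filter.Eventually.and eventually_mem_nhdsWithin ?_) ?_
    · exact (eventually_lt_nhds (by norm_num : (0:ℝ) < 1/2)).filter_mono nhdsWithin_le_nhds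
    · rw [Filter.eventually_all_finset]
      intro e he
      exact (hdens (q e) (hqTD e he).2).eventually (eventually_gt_nhds hetalt)
  obtain ⟨δ, ⟨⟨hδ0, hδhalf⟩, hδE⟩⟩ := hev.exists
  rw [mem_Ioi] at hδ0
  set d : ENNReal := ENNReal.ofReal δ with hd
  have hd0 : d ≠ 0 := (ENNReal.ofReal_pos.mpr hδ0).ne'
  have hdt : d ≠ ⊤ := ENNReal.ofReal_ne_top
  have h2d : ENNReal.ofReal (2*δ) = 2 * d := by
    rw [ENNReal.ofReal_mul (by norm_num : (0:ℝ) ≤ 2), ENNReal.ofReal_ofNat]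
  -- per-edge ball estimates
  have hball : ∀ e ∈ E, volume (Metric.closedBall (q e) δ \ (T ∩ D))
      ≤ η * (2 * d * (2 * d)) := fun e he => by
    have := ball_est hT hTD hδ0 hη1 (hδE e he)
    rwa [vol_ball_prod, h2d] at this
  -- the coordinate sets
  set A : Fin k → Set I01 := fun l => (fun t : I01 => (t : ℝ)) ⁻¹' Metric.closedBall (x l : ℝ) δ
    with hA
  have hAm : ∀ l, MeasurableSet (A l) := fun l =>
    measurable_subtype_coe measurableSet_closedBall
  have hAvol : ∀ l, volume (A l) = volume.restrict (Icc 0 1) (Metric.closedBall (x l : ℝ) δ) :=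
    fun l => mp_coe.measure_preimage measurableSet_closedBall.nullMeasurableSet
  have hAlow : ∀ l, d ≤ volume (A l) := fun l => by
    rw [hAvol l]
    exact interval_lower (x l).2 hδ0 hδhalf.le
  have hAup : ∀ l, volume (A l) ≤ 2 * d := fun l => by
    rw [hAvol l, Measure.restrict_apply' measurableSet_Icc, ← h2d]
    exact le_trans (measure_mono inter_subset_left)
      (le_of_eq (Real.volume_closedBall _ _))
  -- good and bad sets
  set GE : Fin k × Fin k → Set (Fin k → I01) :=
    fun e => {y | ((y e.1 : ℝ), (y e.2 : ℝ)) ∈ T ∩ D} with hGE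
  set Ce : Fin k × Fin k → Set (I01 × I01) := fun e =>
    (fun p : I01 × I01 => ((p.1 : ℝ), (p.2 : ℝ))) ⁻¹'
      ((Metric.closedBall (x e.1 : ℝ) δ ×ˢ Metric.closedBall (x e.2 : ℝ) δ) \ (T ∩ D)) with hCe
  have hCem : ∀ e, MeasurableSet (Ce e) :=
    fun e => (measurable_subtype_coe.comp measurable_fst |>.prodMk
      (measurable_subtype_coe.comp measurable_snd))
      ((measurableSet_closedBall.prod measurableSet_closedBall).diff
        (hT.inter hD))
  set Bad : Fin k × Fin k → Set (Fin k → I01) := fun e =>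
    {y : Fin k → I01 | (y e.1, y e.2) ∈ Ce e ∧ ∀ l, ¬(l = e.1 ∨ l = e.2) → y l ∈ A l} with hBad
  -- bad measure bound
  have hBadle : ∀ e ∈ E, volume (Bad e) ≤ η * (2*d) ^ k := by
    intro e he
    rw [hBad]
    rw [pi_pair_split (hE e he) (hCem e) hAm]
    have h1 : volume (Ce e) ≤ η * (2 * d * (2 * d)) := by
      refine le_trans ?_ (hball e he)
      rw [hCe]
      rw [mp_coe2.measure_preimage (((measurableSet_closedBall.prod
        measurableSet_closedBall).diff (hT.inter hD)).nullMeasurableSet)]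
      rw [Measure.restrict_apply' (measurableSet_Icc.prod measurableSet_Icc)]
      refine le_trans (measure_mono inter_subset_left) (le_of_eq ?_)
      rw [closedBall_prod_same]
    have h2 : ∏ l ∈ Finset.univ.filter (fun l => ¬(l = e.1 ∨ l = e.2)), volume (A l)
        ≤ ∏ l ∈ Finset.univ.filter (fun l => ¬(l = e.1 ∨ l = e.2)), (2*d) :=
      Finset.prod_le_prod' fun l _ => hAup l
    calc volume (Ce e) * ∏ l ∈ Finset.univ.filter (fun l => ¬(l = e.1 ∨ l = e.2)), volume (A l)
        ≤ (η * (2 * d * (2 * d))) * ∏ l ∈ Finset.univ.filter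
            (fun l => ¬(l = e.1 ∨ l = e.2)), (2*d) := mul_le_mul' h1 h2
      _ = η * (2*d) ^ k := by
          have hfil : Finset.univ.filter (fun l : Fin k => (l = e.1 ∨ l = e.2)) = {e.1, e.2} := by
            ext l; simp
          have hsplit := Finset.prod_filter_mul_prod_filter_not Finset.univ
            (fun l : Fin k => (l = e.1 ∨ l = e.2)) (fun _ => (2*d : ENNReal))
          rw [hfil, Finset.prod_pair (hE e he)] at hsplit
          have huniv : ∏ _l ∈ (Finset.univ : Finset (Fin k)), (2*d : ENNReal) = (2*d) ^ k := by
            rw [Finset.prod_const, Finset.card_univ, Fintype.card_fin]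
          rw [mul_assoc, hsplit, huniv]
  -- covering
  have hcover : Set.pi univ A ⊆
      (Set.pi univ A ∩ ⋂ e ∈ E, GE e) ∪ ⋃ e ∈ E, Bad e := by
    intro y hy
    by_cases hall : ∀ e ∈ E, y ∈ GE e
    · exact Or.inl ⟨hy, mem_iInter₂.mpr hall⟩
    · push_neg at hall
      obtain ⟨e, he, hnot⟩ := hall
      refine Or.inr (mem_biUnion he ?_)
      refine ⟨⟨⟨hy e.1 (mem_univ _), hy e.2 (mem_univ _)⟩, ?_⟩, fun l _ => hy l (mem_univ _)⟩
      exact fun hmem => hnot hmem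
  -- positivity of good part
  suffices hgood : volume (Set.pi univ A ∩ ⋂ e ∈ E, GE e) ≠ 0 by
    have hsub : Set.pi univ A ∩ ⋂ e ∈ E, GE e ⊆ Function.support f := by
      intro y hy
      have hyGE := mem_iInter₂.mp hy.2
      have : 0 < f y := Finset.prod_pos fun e he => hUpos _ (hyGE e he)
      exact this.ne'
    exact lt_of_lt_of_le (pos_iff_ne_zero.mpr hgood) (measure_mono hsub)
  intro h0
  have hpiA : volume (Set.pi univ A) = ∏ l, volume (A l) := by
    rw [volume_pi, Measure.pi_pi]
  have h1 : d ^ k ≤ volume (Set.pi univ A) := by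
    rw [hpiA]
    calc d ^ k = ∏ _l : Fin k, d := by
          rw [Finset.prod_const, Finset.card_univ, Fintype.card_fin]
      _ ≤ ∏ l, volume (A l) := Finset.prod_le_prod' fun l _ => hAlow l
  have h2 : volume (Set.pi univ A) ≤ ∑ e ∈ E, volume (Bad e) := by
    refine le_trans (measure_mono hcover) (le_trans (measure_union_le _ _) ?_)
    rw [h0, zero_add]
    exact measure_biUnion_finset_le E Bad
  have h3 : ∑ e ∈ E, volume (Bad e) ≤ (E.card : ENNReal) * (η * (2*d)^k) := by
    refine le_trans (Finset.sum_le_sum hBadle) ?_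
    rw [Finset.sum_const, nsmul_eq_mul]
  have h4 : (E.card : ENNReal) * (η * (2*d)^k) = (κ * η) * d ^ k := by
    rw [mul_pow, hκ]; ring
  have hκη : κ * η < 1 := by
    have h5 : κ * η = κ / (κ + 1) := by rw [hη, div_eq_mul_inv]
    rw [h5, ENNReal.div_lt_iff (Or.inl hκ10) (Or.inl hκ1t), one_mul]
    exact ENNReal.lt_add_right hκt one_ne_zero
  have hfin : d ^ k ≤ (κ * η) * d ^ k := le_trans h1 (le_trans h2 (le_trans h3 (le_of_eq h4)))
  have hlt : (κ * η) * d ^ k < 1 * d ^ k :=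
    by rw [mul_comm (κ * η), mul_comm 1]; exact ENNReal.mul_lt_mul_right (pow_ne_zero k hd0) (ENNReal.pow_ne_top hdt) hκη
  rw [one_mul] at hlt
  exact absurd (lt_of_le_of_lt hfin hlt) (lt_irrefl _)


/-- The Infinite Removal Lemma: every graphon equals a.e. a graphon `U` such that for
every graph `F`, either `t(F,U) > 0` or `U` is `F`-free. -/
theorem infinite_removal_lemma (W : I01 × I01 → ℝ)
    (hW : IsGraphon W) (hW01 : ∀ p, W p ∈ Set.Icc (0 : ℝ) 1) :
    ∃ U : I01 × I01 → ℝ, IsGraphon U ∧ (∀ p, U p ∈ Set.Icc (0 : ℝ) 1) ∧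
      U =ᵐ[volume] W ∧
      ∀ (k : ℕ) (F : SimpleGraph (Fin k)), 0 < homDensity F U ∨ GraphonFree F U := by
  classical
  obtain ⟨hsym, -, hmeas⟩ := hW
  set g := hmeas.mk W with hgdef
  have hgm : Measurable g := hmeas.measurable_mk
  have hgW : W =ᵐ[volume] g := hmeas.ae_eq_mk
  have hswapmp : MeasurePreserving (Prod.swap : I01 × I01 → I01 × I01) volume volume := by
    rw [Measure.volume_eq_prod]
    exact Measure.measurePreserving_swap
  have hgswap : (fun p : I01 × I01 => W p.swap) =ᵐ[volume] (fun p => g p.swap) := by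
    have h := MeasureTheory.ae_eq_comp (f := (Prod.swap : I01 × I01 → I01 × I01))
      hswapmp.measurable.aemeasurable (g := W) (g' := g) (by rw [hswapmp.map_eq]; exact hgW)
    exact h
  -- the symmetric measurable clamped version
  set W0 : I01 × I01 → ℝ := fun p => max 0 (min 1 ((g p + g p.swap) / 2)) with hW0def
  have hW0m : Measurable W0 := by
    apply Measurable.max measurable_const
    apply Measurable.min measurable_const
    exact (hgm.add (hgm.comp measurable_swap)).div_const 2
  have hW0sym : ∀ a b : I01, W0 (a, b) = W0 (b, a) := by
    intro a b
    simp only [hW0def, Prod.swap_prod_mk]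
    rw [add_comm]
  have hW00 : ∀ p, 0 ≤ W0 p := fun p => le_max_left _ _
  have hW01' : ∀ p, W0 p ≤ 1 := fun p => max_le zero_le_one (min_le_left _ _)
  have hWswap : ∀ p : I01 × I01, W p.swap = W p := by
    rintro ⟨a, b⟩
    exact (hsym a b).symm
  have hW0W : W0 =ᵐ[volume] W := by
    filter_upwards [hgW, hgswap] with p h1 h2
    have : (g p + g p.swap) / 2 = W p := by
      rw [← h1, ← h2, hWswap]
      ring
    rw [hW0def]
    simp only
    rw [this, min_eq_right (hW01 p).2, max_eq_right (hW01 p).1]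
  -- extension to the plane
  set ι : I01 × I01 → ℝ × ℝ := fun p => ((p.1 : ℝ), (p.2 : ℝ)) with hιdef
  have hιemb : MeasurableEmbedding ι :=
    (MeasurableEmbedding.subtype_coe measurableSet_Icc).prodMap
      (MeasurableEmbedding.subtype_coe measurableSet_Icc)
  have hιinj : Function.Injective ι := hιemb.injective
  set V : ℝ × ℝ → ℝ := Function.extend ι W0 (fun _ => 0) with hVdef
  have hVm : Measurable V := hιemb.measurable_extend hW0m measurable_const
  have hVι : ∀ p, V (ι p) = W0 p := fun p => hιinj.extend_apply _ _ p
  set T : Set (ℝ × ℝ) := {q | 0 < V q} with hTdef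
  have hTm : MeasurableSet T := measurableSet_lt measurable_const hVm
  have hιswap : ∀ p : I01 × I01, ι p.swap = (ι p).swap := fun p => rfl
  have hVsym : ∀ q : ℝ × ℝ, V q.swap = V q := by
    intro q
    by_cases hq : ∃ p, ι p = q
    · obtain ⟨p, rfl⟩ := hq
      rw [← hιswap, hVι, hVι]
      rcases p with ⟨a, b⟩
      exact (hW0sym a b).symm
    · have hq' : ¬∃ p, ι p = q.swap := by
        rintro ⟨p, hp⟩
        refine hq ⟨p.swap, ?_⟩
        rw [hιswap, hp, Prod.swap_swap]
      rw [hVdef]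
      rw [Function.extend_apply' _ _ _ hq', Function.extend_apply' _ _ _ hq]
  have hTsym : Prod.swap ⁻¹' T = T := by
    ext q
    simp only [hTdef, mem_preimage, mem_setOf_eq, hVsym]
  -- density points
  set Dt : Set (ℝ × ℝ) := {q | Filter.Tendsto
      (fun r => volume (T ∩ Metric.closedBall q r) / volume (Metric.closedBall q r))
      (nhdsWithin 0 (Ioi 0)) (nhds 1)} with hDtdef
  have hN0 : volume (T \ Dt) = 0 := by
    have hdensae := Besicovitch.ae_tendsto_measure_inter_div_of_measurableSet
      (volume : Measure (ℝ × ℝ)) hTm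
    refine measure_mono_null ?_ (ae_iff.mp hdensae)
    intro q hq
    simp only [mem_setOf_eq]
    have hind : T.indicator (1 : (ℝ × ℝ) → ENNReal) q = 1 := by
      rw [indicator_of_mem hq.1]; rfl
    rw [hind]
    exact hq.2
  set M : Set (ℝ × ℝ) := toMeasurable volume (T \ Dt) with hMdef
  have hMm : MeasurableSet M := measurableSet_toMeasurable _ _
  have hM0 : volume M = 0 := by rw [hMdef, measure_toMeasurable]; exact hN0
  set D1 : Set (ℝ × ℝ) := T \ M with hD1def
  have hD1m : MeasurableSet D1 := hTm.diff hMm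
  have hD1sub : D1 ⊆ T ∩ Dt := by
    intro q hq
    refine ⟨hq.1, ?_⟩
    by_contra h
    exact hq.2 (subset_toMeasurable _ _ ⟨hq.1, h⟩)
  set D : Set (ℝ × ℝ) := D1 ∩ Prod.swap ⁻¹' D1 with hDdef
  have hDm : MeasurableSet D := hD1m.inter (hD1m.preimage measurable_swap)
  have hswapR : MeasurePreserving (Prod.swap : ℝ × ℝ → ℝ × ℝ) volume volume := by
    rw [Measure.volume_eq_prod]
    exact Measure.measurePreserving_swap
  have hTD : volume (T \ D) = 0 := by
    have hsub : T \ D ⊆ M ∪ Prod.swap ⁻¹' M := by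
      intro q hq
      rcases hq with ⟨hqT, hqn⟩
      rw [hDdef, mem_inter_iff] at hqn
      push_neg at hqn
      by_cases h1 : q ∈ D1
      · right
        have h2 : Prod.swap q ∈ T := by
          rw [← hTsym] at hqT
          exact hqT
        have h3 : Prod.swap q ∉ D1 := hqn h1
        rw [mem_preimage]
        by_contra h4
        exact h3 ⟨h2, h4⟩
      · left
        by_contra h4
        exact h1 ⟨hqT, h4⟩
    refine measure_mono_null hsub ?_
    have : volume (Prod.swap ⁻¹' M) = volume M :=
      hswapR.measure_preimage hMm.nullMeasurableSet
    refine le_antisymm (le_trans (measure_union_le _ _) ?_) (by simp)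
    rw [this, hM0, add_zero]
  have hdens : ∀ q ∈ D, Filter.Tendsto
      (fun r => volume (T ∩ Metric.closedBall q r) / volume (Metric.closedBall q r))
      (nhdsWithin 0 (Ioi 0)) (nhds 1) := fun q hq => (hD1sub hq.1).2
  -- the final graphon
  set U : I01 × I01 → ℝ := fun p => if ι p ∈ D then W0 p else 0 with hUdef
  have hUm : Measurable U := Measurable.ite (hιemb.measurable hDm) hW0m measurable_const
  have hU0 : ∀ p, 0 ≤ U p := by
    intro p
    rw [hUdef]
    simp only
    split
    · exact hW00 p
    · exact le_rfl
  have hU1 : ∀ p, U p ≤ 1 := by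
    intro p
    rw [hUdef]
    simp only
    split
    · exact hW01' p
    · exact zero_le_one
  have hDswap : ∀ q : ℝ × ℝ, q.swap ∈ D ↔ q ∈ D := by
    intro q
    rw [hDdef]
    simp only [mem_inter_iff, mem_preimage, Prod.swap_swap]
    exact and_comm
  have hUsym : ∀ a b : I01, U (a, b) = U (b, a) := by
    intro a b
    rw [hUdef]
    simp only
    have h1 : ι (b, a) = (ι (a, b)).swap := rfl
    rw [h1]
    by_cases hmem : ι (a, b) ∈ D
    · rw [if_pos hmem, if_pos ((hDswap _).mpr hmem), hW0sym]
    · rw [if_neg hmem, if_neg (fun h => hmem ((hDswap _).mp h))]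
  have hUae : U =ᵐ[volume] W := by
    have h2 : U =ᵐ[volume] W0 := by
      rw [Filter.EventuallyEq, ae_iff]
      refine measure_mono_null (?_ : _ ⊆ ι ⁻¹' (T \ D)) ?_
      · intro p hp
        simp only [mem_setOf_eq, hUdef] at hp
        by_cases hmem : ι p ∈ D
        · rw [if_pos hmem] at hp
          exact absurd rfl hp
        · rw [if_neg hmem] at hp
          have hW0p : 0 < W0 p := lt_of_le_of_ne (hW00 p) hp
          refine ⟨?_, hmem⟩
          rw [hTdef, mem_setOf_eq, hVι p]
          exact hW0p
      · rw [mp_coe2.measure_preimage ((hTm.diff hDm).nullMeasurableSet),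
          Measure.restrict_apply' (measurableSet_Icc.prod measurableSet_Icc)]
        exact measure_mono_null inter_subset_left hTD
    exact h2.trans hW0W
  have hUc : ∀ p : I01 × I01, U p ≠ 0 → (((p.1 : ℝ), (p.2 : ℝ)) ∈ T ∩ D) := by
    intro p hp
    rw [hUdef] at hp
    simp only at hp
    by_cases hmem : ι p ∈ D
    · rw [if_pos hmem] at hp
      have hW0p : 0 < W0 p := lt_of_le_of_ne (hW00 p) (Ne.symm hp)
      refine ⟨?_, hmem⟩
      rw [hTdef, mem_setOf_eq, hVι p]
      exact hW0p
    · rw [if_neg hmem] at hp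
      exact absurd rfl hp
  have hUpos : ∀ p : I01 × I01, (((p.1 : ℝ), (p.2 : ℝ)) ∈ T ∩ D) → 0 < U p := by
    intro p hp
    rw [hUdef]
    simp only
    rw [if_pos hp.2]
    have := hp.1
    rw [hTdef, mem_setOf_eq, hVι p] at this
    exact this
  refine ⟨U, ⟨hUsym, ⟨1, fun p => abs_le.mpr ⟨le_trans (by norm_num) (hU0 p), hU1 p⟩⟩,
    hUm.aemeasurable⟩, fun p => ⟨hU0 p, hU1 p⟩, hUae, ?_⟩
  intro k F
  by_cases hGF : GraphonFree F U
  · exact Or.inr hGF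
  left
  rw [GraphonFree] at hGF
  push_neg at hGF
  obtain ⟨x, hx⟩ := hGF
  unfold homDensity
  refine density_pos U hUm hU0 hU1 T D hTm hDm hTD hUc hUpos hdens _ ?_ x ?_
  · intro e he
    have := (Finset.mem_filter.mp he).2.1
    exact Fin.ne_of_lt this
  · intro e he
    exact hx e.1 e.2 (Finset.mem_filter.mp he).2.2


end
end
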